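/- arXiv:1003.0118 — 2 statements merged into one kernel-verified Lean document; each statement's English description precedes it below -/
import Mathlib

section
/- In a stochastic BPA game with simple target set T, if the uniform strategy σ (which at every player-Box configuration assigns the uniform distribution on outgoing edges) is used, then for every symbol X ∈ W_Box(T,>0) ∩ Γ and every strategy π of player Diamond, there exists a path in the play G(σ,π) from X to a configuration in T whose length is at most 2^{2|Γ|} and all of whose configurations have length at most 2|Γ|. -/
open scoped Classical

/-- A stochastic BPA game: finite stack alphabet `Γ`, rules `X → α` with
`|α| ≤ 2`, symbols partitioned among player Box, player Diamond, and
probabilistic symbols, the latter carrying positive rational distributions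
over their rules. -/
structure BPA (Γ : Type*) [Fintype Γ] where
  rule : Γ → List Γ → Prop
  rule_len : ∀ X α, rule X α → α.length ≤ 2
  rule_total : ∀ X, ∃ α, rule X α
  isBox : Γ → Prop
  isDiamond : Γ → Prop
  isCirc : Γ → Prop
  cover : ∀ X, isBox X ∨ isDiamond X ∨ isCirc X
  disjBD : ∀ X, ¬ (isBox X ∧ isDiamond X)
  disjBC : ∀ X, ¬ (isBox X ∧ isCirc X)
  disjDC : ∀ X, ¬ (isDiamond X ∧ isCirc X)
  prob : Γ → List Γ → ℝ
  prob_nonneg : ∀ X α, 0 ≤ prob X α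
  prob_rat : ∀ X α, ∃ q : ℚ, prob X α = (q : ℝ)
  prob_supp : ∀ X α, isCirc X → (0 < prob X α ↔ rule X α)
  prob_sum : ∀ X, isCirc X → ∑' α, prob X α = 1

variable {Γ : Type*} [Fintype Γ]

/-- A history-dependent randomized strategy for the player owning the symbols
satisfying `own` in the stochastic game induced by a BPA game: to every history
(sequence of configurations) and current configuration `X :: β` with `own X`,
it assigns a probability distribution on the applicable rules. -/
structure BPA.Strat (Δ : BPA Γ) (own : Γ → Prop) where
  f : List (List Γ) → List Γ → List Γ → ℝ
  nonneg : ∀ w c α, 0 ≤ f w c α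
  supp : ∀ w X β α, own X → f w (X :: β) α ≠ 0 → Δ.rule X α
  sum_one : ∀ w X β, own X → ∑' α, f w (X :: β) α = 1

/-- The distribution on rules chosen at configuration `c` after history `w`. -/
noncomputable def BPA.choice (Δ : BPA Γ) (σ : Δ.Strat Δ.isBox)
    (π : Δ.Strat Δ.isDiamond) (w : List (List Γ)) (c : List Γ) (α : List Γ) : ℝ :=
  match c with
  | [] => 0
  | X :: _ => if Δ.isBox X then σ.f w c α else if Δ.isDiamond X then π.f w c α
      else Δ.prob X α

/-- One-step transition probability between configurations in the play
induced by a BPA game (the empty configuration `ε` loops with probability 1,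
and `X :: β` moves to `α ++ β` for a rule `X → α`). -/
noncomputable def BPA.stepP (Δ : BPA Γ) (σ : Δ.Strat Δ.isBox)
    (π : Δ.Strat Δ.isDiamond) (w : List (List Γ)) (c c' : List Γ) : ℝ :=
  match c with
  | [] => if c' = [] then 1 else 0
  | X :: β => ∑' α : List Γ,
      if α ++ β = c' ∧ Δ.rule X α then Δ.choice σ π w (X :: β) α else 0

/-- Probability of reaching `T` from configuration `c` within at most `n`
transitions, after history `w`. -/
noncomputable def BPA.reachN (Δ : BPA Γ) (σ : Δ.Strat Δ.isBox)
    (π : Δ.Strat Δ.isDiamond) (T : Set (List Γ)) :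
    ℕ → List (List Γ) → List Γ → ℝ
  | 0, _, c => if c ∈ T then 1 else 0
  | n+1, w, c => if c ∈ T then 1 else
      ∑' c', Δ.stepP σ π w c c' * BPA.reachN Δ σ π T n (w ++ [c]) c'

/-- Probability `P_c^{σ,π}(Reach(T))` of reaching `T` from configuration `c`. -/
noncomputable def BPA.reachP (Δ : BPA Γ) (σ : Δ.Strat Δ.isBox)
    (π : Δ.Strat Δ.isDiamond) (T : Set (List Γ)) (c : List Γ) : ℝ :=
  ⨆ n, Δ.reachN σ π T n [] c

/-- The winning region `W_Box(T, >0)`. -/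
def BPA.WBoxPos (Δ : BPA Γ) (T : Set (List Γ)) : Set (List Γ) :=
  {c | ∃ σ : Δ.Strat Δ.isBox, ∀ π : Δ.Strat Δ.isDiamond, 0 < Δ.reachP σ π T c}

/-- The winning region `W_Box(T, =1)`. -/
def BPA.WBoxOne (Δ : BPA Γ) (T : Set (List Γ)) : Set (List Γ) :=
  {c | ∃ σ : Δ.Strat Δ.isBox, ∀ π : Δ.Strat Δ.isDiamond, Δ.reachP σ π T c = 1}

/-- The winning region `W_Diamond(T, =0)`. -/
def BPA.WDiaZero (Δ : BPA Γ) (T : Set (List Γ)) : Set (List Γ) :=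
  {c | ∃ π : Δ.Strat Δ.isDiamond, ∀ σ : Δ.Strat Δ.isBox, Δ.reachP σ π T c = 0}

/-- The winning region `W_Diamond(T, <1)`. -/
def BPA.WDiaLtOne (Δ : BPA Γ) (T : Set (List Γ)) : Set (List Γ) :=
  {c | ∃ π : Δ.Strat Δ.isDiamond, ∀ σ : Δ.Strat Δ.isBox, Δ.reachP σ π T c < 1}

/-- The language `{[X] : X ∈ S}` of one-letter words over a set of symbols. -/
def symLang (S : Set Γ) : Language Γ := {c | ∃ X ∈ S, c = [X]}

/-- The simple set of target configurations `S·Γ*` determined by the set of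
symbols `S`: membership depends only on the top stack symbol, and `ε ∉ S·Γ*`. -/
def topLang (S : Set Γ) : Language Γ := {c | ∃ X β, c = X :: β ∧ X ∈ S}



namespace BPAshort

variable {Γ : Type*} [Fintype Γ]

/-! ### Attractor over `Bool × Γ` -/

/-- Goodness of a rule right-hand side, where the boolean says whether the
continuation below the rewritten symbol is winning. -/
def g (P : Bool × Γ → Prop) (b : Bool) : List Γ → Prop
  | [] => b = true
  | [Y] => P (b, Y)
  | [Y, Z] => (P (b, Z) ∧ P (true, Y)) ∨ P (false, Y)
  | _ => False

@[simp] lemma g_nil (P : Bool × Γ → Prop) (b : Bool) : g P b [] = (b = true) := rfl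
@[simp] lemma g_one (P : Bool × Γ → Prop) (b : Bool) (Y : Γ) : g P b [Y] = P (b, Y) := rfl
@[simp] lemma g_two (P : Bool × Γ → Prop) (b : Bool) (Y Z : Γ) :
    g P b [Y, Z] = ((P (b, Z) ∧ P (true, Y)) ∨ P (false, Y)) := rfl

def branch (Δ : BPA Γ) (G : List Γ → Prop) (X : Γ) : Prop :=
  (Δ.isDiamond X → ∀ α, Δ.rule X α → G α) ∧
  (¬ Δ.isDiamond X → ∃ α, Δ.rule X α ∧ G α)

lemma g_mono {P Q : Bool × Γ → Prop} (h : ∀ p, P p → Q p) :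
    ∀ (b : Bool) (l : List Γ), g P b l → g Q b l := by
  intro b l
  rcases l with _ | ⟨Y, _ | ⟨Z, _ | ⟨W, t⟩⟩⟩
  · exact id
  · exact h _
  · rintro (⟨h1, h2⟩ | h1)
    · exact Or.inl ⟨h _ h1, h _ h2⟩
    · exact Or.inr (h _ h1)
  · exact id

lemma branch_mono {Δ : BPA Γ} {G G' : List Γ → Prop} (h : ∀ l, G l → G' l) {X : Γ} :
    branch Δ G X → branch Δ G' X := by
  rintro ⟨h1, h2⟩
  refine ⟨fun hD α hr => h _ (h1 hD α hr), fun hND => ?_⟩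
  obtain ⟨α, hr, hg⟩ := h2 hND
  exact ⟨α, hr, h _ hg⟩

def Rp (Δ : BPA Γ) (ΓT : Set Γ) : ℕ → Bool × Γ → Prop
  | 0 => fun _ => False
  | n+1 => fun p => Rp Δ ΓT n p ∨ (p.2 ∈ ΓT ∨ branch Δ (g (Rp Δ ΓT n) p.1) p.2)

lemma Rp_zero (Δ : BPA Γ) (ΓT : Set Γ) (p : Bool × Γ) : Rp Δ ΓT 0 p = False := rfl

lemma Rp_succ (Δ : BPA Γ) (ΓT : Set Γ) (n : ℕ) (p : Bool × Γ) :
    Rp Δ ΓT (n+1) p =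
      (Rp Δ ΓT n p ∨ (p.2 ∈ ΓT ∨ branch Δ (g (Rp Δ ΓT n) p.1) p.2)) := rfl

/-- Generic stabilization of a monotone iteration over a finite type. -/
lemma stab {ι : Type*} [Fintype ι] {P : ℕ → ι → Prop} {Q : (ι → Prop) → ι → Prop}
    (hQ : ∀ A B : ι → Prop, (∀ x, A x → B x) → ∀ x, Q A x → Q B x)
    (hs : ∀ n x, P (n+1) x ↔ P n x ∨ Q (P n) x) :
    ∀ n x, P n x → P (Fintype.card ι) x := by
  have mono1 : ∀ n x, P n x → P (n+1) x := fun n x hx => (hs n x).2 (Or.inl hx)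
  have mono : ∀ m n, m ≤ n → ∀ x, P m x → P n x := by
    intro m n h
    induction n, h using Nat.le_induction with
    | base => exact fun _ => id
    | succ n hmn ih => exact fun x hx => mono1 n x (ih x hx)
  have stable : ∀ m, (∀ x, P (m+1) x → P m x) → ∀ j x, P (m+j) x → P m x := by
    intro m hm j
    induction j with
    | zero => exact fun x => id
    | succ j ih =>
      intro x hx
      have hx' : P (m+j) x ∨ Q (P (m+j)) x := (hs (m+j) x).1 hx
      rcases hx' with h | h
      · exact ih x h
      · exact hm x ((hs m x).2 (Or.inr (hQ _ _ ih x h)))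
  have hexists : ∃ m ≤ Fintype.card ι, ∀ x, P (m+1) x → P m x := by
    by_contra hc
    push_neg at hc
    have grow : ∀ m, m ≤ Fintype.card ι + 1 → m ≤ {x | P m x}.ncard := by
      intro m
      induction m with
      | zero => intro _; exact Nat.zero_le _
      | succ m ihm =>
        intro hm
        have h1 := ihm (by omega)
        obtain ⟨x, hx1, hx2⟩ := hc m (by omega)
        have hss : {x | P m x} ⊂ {x | P (m+1) x} := by
          constructor
          · exact fun y hy => mono1 m y hy
          · intro hsub
            exact hx2 (hsub hx1)
        have := Set.ncard_lt_ncard hss (Set.toFinite _)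
        omega
    have hg := grow (Fintype.card ι + 1) le_rfl
    have hle : {x | P (Fintype.card ι + 1) x}.ncard ≤ Fintype.card ι := by
      have h2 := Set.ncard_le_ncard (Set.subset_univ {x | P (Fintype.card ι + 1) x})
        (Set.toFinite _)
      rwa [Set.ncard_univ, Nat.card_eq_fintype_card] at h2
    omega
  obtain ⟨m, hmK, hm⟩ := hexists
  intro n x hx
  rcases le_or_gt n m with h | h
  · exact mono m (Fintype.card ι) hmK x (mono n m h x hx)
  · have hx' : P m x := by
      have hn : n = m + (n - m) := by omega
      exact stable m hm (n - m) x (by rw [← hn]; exact hx)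
    exact mono m _ hmK x hx'

def RK (Δ : BPA Γ) (ΓT : Set Γ) : Bool × Γ → Prop := Rp Δ ΓT (Fintype.card (Bool × Γ))

lemma Rp_le_RK (Δ : BPA Γ) (ΓT : Set Γ) : ∀ n p, Rp Δ ΓT n p → RK Δ ΓT p :=
  stab (Q := fun A p => p.2 ∈ ΓT ∨ branch Δ (g A p.1) p.2)
    (fun A B h p hp => hp.imp id (branch_mono (g_mono h p.1)))
    (fun n x => Iff.rfl)

lemma RK_closed {Δ : BPA Γ} {ΓT : Set Γ} {p : Bool × Γ}
    (h : p.2 ∈ ΓT ∨ branch Δ (g (RK Δ ΓT) p.1) p.2) : RK Δ ΓT p :=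
  Rp_le_RK Δ ΓT (Fintype.card (Bool × Γ) + 1) p (Or.inr h)

lemma RK_unfold {Δ : BPA Γ} {ΓT : Set Γ} {p : Bool × Γ} (h : ¬ RK Δ ΓT p) :
    p.2 ∉ ΓT ∧ ¬ branch Δ (g (RK Δ ΓT) p.1) p.2 :=
  ⟨fun hT => h (RK_closed (Or.inl hT)), fun hb => h (RK_closed (Or.inr hb))⟩

lemma bmono (Δ : BPA Γ) (ΓT : Set Γ) : ∀ n (X : Γ), Rp Δ ΓT n (false, X) → Rp Δ ΓT n (true, X) := by
  intro n
  induction n with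
  | zero => intro X h; exact h.elim
  | succ n ih =>
    intro X h
    rcases h with h | h | h
    · exact Or.inl (ih X h)
    · exact Or.inr (Or.inl h)
    · refine Or.inr (Or.inr (branch_mono ?_ h))
      intro l
      rcases l with _ | ⟨Y, _ | ⟨Z, _ | ⟨W, t⟩⟩⟩
      · intro hl; exact absurd hl Bool.false_ne_true
      · exact ih Y
      · rintro (⟨h1, h2⟩ | h1)
        · exact Or.inl ⟨ih Z h1, h2⟩
        · exact Or.inr h1
      · exact id

lemma bmono_RK {Δ : BPA Γ} {ΓT : Set Γ} {X : Γ} (h : RK Δ ΓT (false, X)) : RK Δ ΓT (true, X) :=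
  bmono Δ ΓT _ X h

/-- The winning-region candidate over configurations. -/
def RS (Δ : BPA Γ) (ΓT : Set Γ) : List Γ → Prop
  | [] => False
  | X :: β => (RS Δ ΓT β ∧ RK Δ ΓT (true, X)) ∨ RK Δ ΓT (false, X)

@[simp] lemma RS_nil (Δ : BPA Γ) (ΓT : Set Γ) : RS Δ ΓT [] = False := rfl
@[simp] lemma RS_cons (Δ : BPA Γ) (ΓT : Set Γ) (X : Γ) (β : List Γ) :
    RS Δ ΓT (X :: β) = ((RS Δ ΓT β ∧ RK Δ ΓT (true, X)) ∨ RK Δ ΓT (false, X)) := rfl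

lemma T_sub_RS (Δ : BPA Γ) (ΓT : Set Γ) {c : List Γ} (h : c ∈ topLang ΓT) : RS Δ ΓT c := by
  obtain ⟨Y, δ, rfl, hY⟩ := h
  exact Or.inr (RK_closed (Or.inl hY))

/-! ### Trap invariance -/

lemma box_step (Δ : BPA Γ) (ΓT : Set Γ) {X : Γ} {β : List Γ}
    (hND : ¬ Δ.isDiamond X) (hc : ¬ RS Δ ΓT (X :: β)) {α : List Γ} (hr : Δ.rule X α) :
    ¬ RS Δ ΓT (α ++ β) := by
  rw [RS_cons] at hc
  push_neg at hc
  obtain ⟨h2, h1⟩ := hc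
  have allf : ∀ α', Δ.rule X α' → ¬ g (RK Δ ΓT) false α' := by
    intro α' hr' hg
    exact h1 (RK_closed (Or.inr ⟨fun hD => (hND hD).elim, fun _ => ⟨α', hr', hg⟩⟩))
  have closT : ∀ α', Δ.rule X α' → g (RK Δ ΓT) true α' → RK Δ ΓT (true, X) := by
    intro α' hr' hg
    exact RK_closed (Or.inr ⟨fun hD => (hND hD).elim, fun _ => ⟨α', hr', hg⟩⟩)
  rcases α with _ | ⟨Y, _ | ⟨Z, _ | ⟨W, t⟩⟩⟩
  · have hKt : RK Δ ΓT (true, X) := closT [] hr rfl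
    have hβ : ¬ RS Δ ΓT β := fun hβ => h2 hβ hKt
    simpa using hβ
  · simp only [List.cons_append, List.nil_append, RS_cons]
    rintro (⟨hβ, hKtY⟩ | hKfY)
    · exact h2 hβ (closT [Y] hr hKtY)
    · exact allf [Y] hr hKfY
  · simp only [List.cons_append, List.nil_append, RS_cons]
    rintro (⟨hZβ, hKtY⟩ | hKfY)
    · rcases hZβ with ⟨hβ, hKtZ⟩ | hKfZ
      · exact h2 hβ (closT [Y, Z] hr (Or.inl ⟨hKtZ, hKtY⟩))
      · exact allf [Y, Z] hr (Or.inl ⟨hKfZ, hKtY⟩)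
    · exact allf [Y, Z] hr (Or.inr hKfY)
  · have := Δ.rule_len X _ hr
    simp only [List.length_cons] at this
    omega

lemma diamond_escape (Δ : BPA Γ) (ΓT : Set Γ) {X : Γ} {β : List Γ}
    (hD : Δ.isDiamond X) (hc : ¬ RS Δ ΓT (X :: β)) :
    ∃ α, Δ.rule X α ∧ ¬ RS Δ ΓT (α ++ β) := by
  rw [RS_cons] at hc
  push_neg at hc
  obtain ⟨h2, h1⟩ := hc
  have hbf := (RK_unfold h1).2
  have ex_f : ∃ α, Δ.rule X α ∧ ¬ g (RK Δ ΓT) false α := by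
    by_contra hno
    push_neg at hno
    exact hbf ⟨fun _ α hr => hno α hr, fun hnd => absurd hD hnd⟩
  by_cases hβ : RS Δ ΓT β
  · have hKt : ¬ RK Δ ΓT (true, X) := fun h => (h2 hβ) h
    have hbt := (RK_unfold hKt).2
    have ex_t : ∃ α, Δ.rule X α ∧ ¬ g (RK Δ ΓT) true α := by
      by_contra hno
      push_neg at hno
      exact hbt ⟨fun _ α hr => hno α hr, fun hnd => absurd hD hnd⟩
    obtain ⟨α, hr, hg⟩ := ex_t
    refine ⟨α, hr, ?_⟩
    rcases α with _ | ⟨Y, _ | ⟨Z, _ | ⟨W, t⟩⟩⟩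
    · exact absurd rfl hg
    · simp only [List.cons_append, List.nil_append, RS_cons]
      rintro (⟨_, hKtY⟩ | hKfY)
      · exact hg hKtY
      · exact hg (bmono_RK hKfY)
    · have hg1 : ¬ (RK Δ ΓT (true, Z) ∧ RK Δ ΓT (true, Y)) := fun h => hg (by
        rw [g_two]; exact Or.inl h)
      have hg2 : ¬ RK Δ ΓT (false, Y) := fun h => hg (by rw [g_two]; exact Or.inr h)
      simp only [List.cons_append, List.nil_append, RS_cons]
      rintro (⟨hZβ, hKtY⟩ | hKfY)
      · have hKtZ : RK Δ ΓT (true, Z) := by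
          rcases hZβ with ⟨_, h⟩ | h
          · exact h
          · exact bmono_RK h
        exact hg1 ⟨hKtZ, hKtY⟩
      · exact hg2 hKfY
    · have := Δ.rule_len X _ hr
      simp only [List.length_cons] at this
      omega
  · obtain ⟨α, hr, hg⟩ := ex_f
    refine ⟨α, hr, ?_⟩
    rcases α with _ | ⟨Y, _ | ⟨Z, _ | ⟨W, t⟩⟩⟩
    · simpa using hβ
    · simp only [List.cons_append, List.nil_append, RS_cons]
      rintro (⟨hβ', _⟩ | hKfY)
      · exact hβ hβ'
      · exact hg hKfY
    · have hg1 : ¬ (RK Δ ΓT (false, Z) ∧ RK Δ ΓT (true, Y)) := fun h => hg (by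
        rw [g_two]; exact Or.inl h)
      have hg2 : ¬ RK Δ ΓT (false, Y) := fun h => hg (by rw [g_two]; exact Or.inr h)
      simp only [List.cons_append, List.nil_append, RS_cons]
      rintro (⟨hZβ, hKtY⟩ | hKfY)
      · rcases hZβ with ⟨hβ', _⟩ | hKfZ
        · exact hβ hβ'
        · exact hg1 ⟨hKfZ, hKtY⟩
      · exact hg2 hKfY
    · have := Δ.rule_len X _ hr
      simp only [List.length_cons] at this
      omega

/-! ### Basic probability lemmas -/

lemma choice_cons (Δ : BPA Γ) (σ : Δ.Strat Δ.isBox) (π : Δ.Strat Δ.isDiamond)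
    (w : List (List Γ)) (X : Γ) (β α : List Γ) :
    Δ.choice σ π w (X :: β) α =
      if Δ.isBox X then σ.f w (X :: β) α else if Δ.isDiamond X then π.f w (X :: β) α
      else Δ.prob X α := rfl

lemma stepP_nil (Δ : BPA Γ) (σ : Δ.Strat Δ.isBox) (π : Δ.Strat Δ.isDiamond)
    (w : List (List Γ)) (c' : List Γ) :
    Δ.stepP σ π w [] c' = if c' = [] then 1 else 0 := rfl

lemma stepP_cons (Δ : BPA Γ) (σ : Δ.Strat Δ.isBox) (π : Δ.Strat Δ.isDiamond)
    (w : List (List Γ)) (X : Γ) (β c' : List Γ) :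
    Δ.stepP σ π w (X :: β) c' = ∑' α : List Γ,
      if α ++ β = c' ∧ Δ.rule X α then Δ.choice σ π w (X :: β) α else 0 := rfl

lemma reachN_zero (Δ : BPA Γ) (σ : Δ.Strat Δ.isBox) (π : Δ.Strat Δ.isDiamond)
    (T : Set (List Γ)) (w : List (List Γ)) (c : List Γ) :
    Δ.reachN σ π T 0 w c = if c ∈ T then 1 else 0 := rfl

lemma reachN_succ (Δ : BPA Γ) (σ : Δ.Strat Δ.isBox) (π : Δ.Strat Δ.isDiamond)
    (T : Set (List Γ)) (n : ℕ) (w : List (List Γ)) (c : List Γ) :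
    Δ.reachN σ π T (n+1) w c = if c ∈ T then 1 else
      ∑' c', Δ.stepP σ π w c c' * Δ.reachN σ π T n (w ++ [c]) c' := rfl

lemma rules_finite (Δ : BPA Γ) (X : Γ) : {α | Δ.rule X α}.Finite :=
  (List.finite_length_le Γ 2).subset (fun α hα => Δ.rule_len X α hα)

lemma choice_pos_box (Δ : BPA Γ) (σ : Δ.Strat Δ.isBox) (π : Δ.Strat Δ.isDiamond)
    (hunif : ∀ w X β α, Δ.isBox X →
      σ.f w (X :: β) α =
        if Δ.rule X α then (1 : ℝ) / ({α' | Δ.rule X α'}.ncard : ℝ) else 0)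
    {X : Γ} {α : List Γ} (w : List (List Γ)) (β : List Γ)
    (hB : Δ.isBox X) (hr : Δ.rule X α) : 0 < Δ.choice σ π w (X :: β) α := by
  rw [choice_cons, if_pos hB, hunif w X β α hB, if_pos hr]
  have hfin := rules_finite Δ X
  have hpos : (0 : ℝ) < ({α' | Δ.rule X α'}.ncard : ℝ) := by
    exact_mod_cast (Set.ncard_pos hfin).mpr ⟨α, hr⟩
  exact div_pos one_pos hpos

lemma choice_pos_dia (Δ : BPA Γ) (σ : Δ.Strat Δ.isBox) (π : Δ.Strat Δ.isDiamond)
    {X : Γ} {α : List Γ} {w : List (List Γ)} {β : List Γ}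
    (hD : Δ.isDiamond X) (hp : 0 < π.f w (X :: β) α) : 0 < Δ.choice σ π w (X :: β) α := by
  rw [choice_cons, if_neg (fun hB => Δ.disjBD X ⟨hB, hD⟩), if_pos hD]
  exact hp

lemma choice_pos_nd (Δ : BPA Γ) (σ : Δ.Strat Δ.isBox) (π : Δ.Strat Δ.isDiamond)
    (hunif : ∀ w X β α, Δ.isBox X →
      σ.f w (X :: β) α =
        if Δ.rule X α then (1 : ℝ) / ({α' | Δ.rule X α'}.ncard : ℝ) else 0)
    {X : Γ} {α : List Γ} (w : List (List Γ)) (β : List Γ)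
    (hND : ¬ Δ.isDiamond X) (hr : Δ.rule X α) : 0 < Δ.choice σ π w (X :: β) α := by
  rcases Δ.cover X with hB | hD | hC
  · exact choice_pos_box Δ σ π hunif w β hB hr
  · exact absurd hD hND
  · rw [choice_cons, if_neg (fun hB => Δ.disjBC X ⟨hB, hC⟩), if_neg hND]
    exact (Δ.prob_supp X α hC).mpr hr

lemma diamond_pick (Δ : BPA Γ) (π : Δ.Strat Δ.isDiamond) {X : Γ}
    (hD : Δ.isDiamond X) (w : List (List Γ)) (β : List Γ) :
    ∃ α, Δ.rule X α ∧ 0 < π.f w (X :: β) α := by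
  have h1 := π.sum_one w X β hD
  have hex : ∃ α, π.f w (X :: β) α ≠ 0 := by
    by_contra h
    push_neg at h
    have hz : ∑' α, π.f w (X :: β) α = 0 := by simp [h]
    rw [hz] at h1
    exact zero_ne_one h1
  obtain ⟨α, hα⟩ := hex
  exact ⟨α, π.supp w X β α hD hα, lt_of_le_of_ne (π.nonneg w _ α) (Ne.symm hα)⟩

lemma stepP_pos (Δ : BPA Γ) (σ : Δ.Strat Δ.isBox) (π : Δ.Strat Δ.isDiamond)
    {X : Γ} {α : List Γ} {w : List (List Γ)} {β : List Γ}
    (hr : Δ.rule X α) (hc : 0 < Δ.choice σ π w (X :: β) α) :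
    0 < Δ.stepP σ π w (X :: β) (α ++ β) := by
  rw [stepP_cons]
  rw [tsum_eq_single α ?_]
  · rw [if_pos ⟨rfl, hr⟩]; exact hc
  · intro b hb
    rw [if_neg]
    rintro ⟨he, -⟩
    exact hb (List.append_cancel_right he)

/-! ### The bad Diamond strategy and the trap lemma -/

noncomputable def badMove (Δ : BPA Γ) (ΓT : Set Γ) : List Γ → List Γ
  | [] => []
  | X :: β =>
    if h : Δ.isDiamond X ∧ ¬ RS Δ ΓT (X :: β) then
      Classical.choose (diamond_escape Δ ΓT h.1 h.2)
    else Classical.choose (Δ.rule_total X)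

lemma badMove_rule (Δ : BPA Γ) (ΓT : Set Γ) (X : Γ) (β : List Γ) :
    Δ.rule X (badMove Δ ΓT (X :: β)) := by
  rw [badMove]
  split
  · exact (Classical.choose_spec (diamond_escape Δ ΓT (by assumption : Δ.isDiamond X ∧
      ¬ RS Δ ΓT (X :: β)).1 (by assumption : Δ.isDiamond X ∧ ¬ RS Δ ΓT (X :: β)).2)).1
  · exact Classical.choose_spec (Δ.rule_total X)

lemma badMove_spec (Δ : BPA Γ) (ΓT : Set Γ) {X : Γ} {β : List Γ}
    (hD : Δ.isDiamond X) (hc : ¬ RS Δ ΓT (X :: β)) :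
    ¬ RS Δ ΓT (badMove Δ ΓT (X :: β) ++ β) := by
  rw [badMove, dif_pos ⟨hD, hc⟩]
  exact (Classical.choose_spec (diamond_escape Δ ΓT hD hc)).2

noncomputable def piBad (Δ : BPA Γ) (ΓT : Set Γ) : Δ.Strat Δ.isDiamond where
  f w c α := if α = badMove Δ ΓT c then 1 else 0
  nonneg := by
    intro w c α
    split <;> norm_num
  supp := by
    intro w X β α hD hne
    by_cases h : α = badMove Δ ΓT (X :: β)
    · rw [h]; exact badMove_rule Δ ΓT X β
    · rw [if_neg h] at hne
      exact absurd rfl hne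
  sum_one := by
    intro w X β hD
    exact tsum_ite_eq _ 1

lemma trap (Δ : BPA Γ) (ΓT : Set Γ) (σ' : Δ.Strat Δ.isBox) :
    ∀ n (w : List (List Γ)) (c : List Γ), ¬ RS Δ ΓT c →
      Δ.reachN σ' (piBad Δ ΓT) (topLang ΓT) n w c = 0 := by
  intro n
  induction n with
  | zero =>
    intro w c hc
    rw [reachN_zero Δ σ' (piBad Δ ΓT) (topLang ΓT) w c]
    exact if_neg (show ¬ (c ∈ (topLang ΓT : Set (List Γ))) from fun hm => hc (T_sub_RS Δ ΓT hm))
  | succ n ih =>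
    intro w c hc
    rw [reachN_succ Δ σ' (piBad Δ ΓT) (topLang ΓT) n w c]
    refine (if_neg (show ¬ (c ∈ (topLang ΓT : Set (List Γ))) from fun hm => hc (T_sub_RS Δ ΓT hm))).trans ?_
    have hz : ∀ c', Δ.stepP σ' (piBad Δ ΓT) w c c' *
        Δ.reachN σ' (piBad Δ ΓT) (topLang ΓT) n (w ++ [c]) c' = 0 := by
      intro c'
      by_cases hRS : RS Δ ΓT c'
      · refine mul_eq_zero_of_left ?_ _
        cases c with
        | nil =>
          rw [stepP_nil, if_neg]
          rintro rfl
          exact hc hRS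
        | cons X β =>
          rw [stepP_cons]
          have hterm : ∀ α, (if α ++ β = c' ∧ Δ.rule X α then
              Δ.choice σ' (piBad Δ ΓT) w (X :: β) α else 0) = 0 := by
            intro α
            split
            case isTrue h =>
              obtain ⟨heq, hrule⟩ := h
              subst heq
              by_cases hD : Δ.isDiamond X
              · rw [choice_cons, if_neg (fun hB => Δ.disjBD X ⟨hB, hD⟩), if_pos hD]
                show (if α = badMove Δ ΓT (X :: β) then (1:ℝ) else 0) = 0
                rw [if_neg]
                rintro rfl
                exact (badMove_spec Δ ΓT hD hc) hRS
              · exact absurd hRS (box_step Δ ΓT hD hc hrule)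
            case isFalse h => rfl
          calc (∑' α, if α ++ β = c' ∧ Δ.rule X α then
              Δ.choice σ' (piBad Δ ΓT) w (X :: β) α else 0)
              = ∑' α : List Γ, (0:ℝ) := tsum_congr hterm
            _ = 0 := tsum_zero
      · exact mul_eq_zero_of_right _ (ih (w ++ [c]) c' hRS)
    calc (∑' c', Δ.stepP σ' (piBad Δ ΓT) w c c' *
          Δ.reachN σ' (piBad Δ ΓT) (topLang ΓT) n (w ++ [c]) c')
        = ∑' c' : List Γ, (0:ℝ) := tsum_congr hz
      _ = 0 := tsum_zero

lemma RS_of_pos (Δ : BPA Γ) (ΓT : Set Γ) (X : Γ)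
    (hX : [X] ∈ Δ.WBoxPos (topLang ΓT)) : RS Δ ΓT [X] := by
  by_contra hn
  obtain ⟨σ', hσ'⟩ := hX
  have hp := hσ' (piBad Δ ΓT)
  have hz : ∀ n, Δ.reachN σ' (piBad Δ ΓT) (topLang ΓT) n [] [X] = 0 :=
    fun n => trap Δ ΓT σ' n [] [X] hn
  unfold BPA.reachP at hp
  simp only [hz, ciSup_const] at hp
  exact lt_irrefl 0 hp

/-! ### Path construction -/

def pathOK (Δ : BPA Γ) (σ : Δ.Strat Δ.isBox) (π : Δ.Strat Δ.isDiamond)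
    (w : List (List Γ)) (cs : List (List Γ)) : Prop :=
  ∀ i, i + 1 < cs.length →
    0 < Δ.stepP σ π (w ++ cs.take i) (cs.getD i []) (cs.getD (i+1) [])

lemma pathOK_single (Δ : BPA Γ) (σ : Δ.Strat Δ.isBox) (π : Δ.Strat Δ.isDiamond)
    (w : List (List Γ)) (c : List Γ) : pathOK Δ σ π w [c] := by
  intro i hi
  rw [List.length_singleton] at hi
  omega

lemma pathOK_cons {Δ : BPA Γ} {σ : Δ.Strat Δ.isBox} {π : Δ.Strat Δ.isDiamond}
    {w : List (List Γ)} {c c' : List Γ} {t : List (List Γ)}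
    (h : 0 < Δ.stepP σ π w c c') (hp : pathOK Δ σ π (w ++ [c]) (c' :: t)) :
    pathOK Δ σ π w (c :: c' :: t) := by
  intro i hi
  cases i with
  | zero =>
    simpa using h
  | succ j =>
    have hj : j + 1 < (c' :: t).length := by
      simp only [List.length_cons] at hi ⊢
      omega
    have hh := hp j hj
    rw [List.append_assoc, List.singleton_append] at hh
    simp only [List.take_succ_cons, List.getD_cons_succ]
    exact hh

lemma head?_eq {A : Type*} {cs : List A} {a : A} (h : cs.head? = some a) :
    ∃ t, cs = a :: t := by
  cases cs with
  | nil => exact absurd h (by simp)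
  | cons b t =>
    rw [List.head?_cons] at h
    injection h with h
    exact ⟨t, by rw [h]⟩

lemma last_cc {A : Type*} {S : Set A} {a b : A} {t : List A}
    (h : ∃ cl ∈ S, (b :: t).getLast? = some cl) :
    ∃ cl ∈ S, (a :: b :: t).getLast? = some cl := by
  obtain ⟨cl, h1, h2⟩ := h
  exact ⟨cl, h1, by rw [List.getLast?_cons_cons]; exact h2⟩

lemma rpath (Δ : BPA Γ) (ΓT : Set Γ) (σ : Δ.Strat Δ.isBox) (π : Δ.Strat Δ.isDiamond)
    (hunif : ∀ w X β α, Δ.isBox X →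
      σ.f w (X :: β) α =
        if Δ.rule X α then (1 : ℝ) / ({α' | Δ.rule X α'}.ncard : ℝ) else 0) :
    ∀ n (b : Bool) (X : Γ) (β : List Γ) (Lc Hc : ℕ), 1 ≤ Lc →
      Rp Δ ΓT n (b, X) →
      (b = true → ∀ w', ∃ cs : List (List Γ), cs.head? = some β ∧
         (∃ cl ∈ topLang ΓT, cs.getLast? = some cl) ∧ cs.length ≤ Lc ∧
         (∀ c ∈ cs, c.length ≤ Hc) ∧ pathOK Δ σ π w' cs) →
      ∀ w, ∃ cs : List (List Γ), cs.head? = some (X :: β) ∧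
         (∃ cl ∈ topLang ΓT, cs.getLast? = some cl) ∧ cs.length ≤ 2^n - 1 + Lc ∧
         (∀ c ∈ cs, c.length ≤ max Hc (β.length + n)) ∧ pathOK Δ σ π w cs := by
  intro n
  induction n with
  | zero =>
    intro b X β Lc Hc _ h
    exact h.elim
  | succ n ih =>
    intro b X β Lc Hc hLc hR hprov w
    have pow_pos : 1 ≤ 2^n := Nat.one_le_two_pow
    have hps : 2^(n+1) = 2 * 2^n := by rw [pow_succ]; ring
    rcases hR with hR | hT | hbr
    · obtain ⟨cs, h1, h2, h3, h4, h5⟩ := ih b X β Lc Hc hLc hR hprov w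
      refine ⟨cs, h1, h2, by omega, ?_, h5⟩
      intro c hcm
      exact le_trans (h4 c hcm) (max_le_max le_rfl (by omega))
    · refine ⟨[X :: β], rfl, ⟨X :: β, ⟨X, β, rfl, hT⟩, rfl⟩, ?_, ?_,
        pathOK_single Δ σ π w (X :: β)⟩
      · simp only [List.length_singleton]
        omega
      · intro c hcm
        rw [List.mem_singleton] at hcm
        subst hcm
        refine le_trans ?_ (le_max_right _ _)
        simp only [List.length_cons]
        omega
    · have hstep : ∃ α, Δ.rule X α ∧ g (Rp Δ ΓT n) b α ∧ 0 < Δ.choice σ π w (X :: β) α := by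
        by_cases hD : Δ.isDiamond X
        · obtain ⟨α, hr, hpos⟩ := diamond_pick Δ π hD w β
          exact ⟨α, hr, hbr.1 hD α hr, choice_pos_dia Δ σ π hD hpos⟩
        · obtain ⟨α, hr, hg⟩ := hbr.2 hD
          exact ⟨α, hr, hg, choice_pos_nd Δ σ π hunif w β hD hr⟩
      obtain ⟨α, hr, hg, hch⟩ := hstep
      have hsp : 0 < Δ.stepP σ π w (X :: β) (α ++ β) := stepP_pos Δ σ π hr hch
      rcases α with _ | ⟨Y, _ | ⟨Z, _ | ⟨W, t⟩⟩⟩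
      · -- pop rule
        have hb : b = true := hg
        obtain ⟨cs, h1, h2, h3, h4, h5⟩ := hprov hb (w ++ [X :: β])
        obtain ⟨t0, rfl⟩ := head?_eq h1
        refine ⟨(X :: β) :: β :: t0, rfl, last_cc h2, ?_, ?_, ?_⟩
        · simp only [List.length_cons] at h3 ⊢
          omega
        · intro c hcm
          rcases List.mem_cons.mp hcm with rfl | hcm
          · refine le_trans ?_ (le_max_right _ _)
            simp only [List.length_cons]
            omega
          · exact le_trans (h4 c hcm) (le_max_left _ _)
        · exact pathOK_cons (by simpa using hsp) h5
      · -- rule X → [Y]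
        have hRY : Rp Δ ΓT n (b, Y) := hg
        obtain ⟨cs, h1, h2, h3, h4, h5⟩ := ih b Y β Lc Hc hLc hRY hprov (w ++ [X :: β])
        obtain ⟨t0, rfl⟩ := head?_eq h1
        refine ⟨(X :: β) :: (Y :: β) :: t0, rfl, last_cc h2, ?_, ?_, ?_⟩
        · simp only [List.length_cons] at h3 ⊢
          omega
        · intro c hcm
          rcases List.mem_cons.mp hcm with rfl | hcm
          · refine le_trans ?_ (le_max_right _ _)
            simp only [List.length_cons]
            omega
          · exact le_trans (h4 c hcm) (max_le_max le_rfl (by omega))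
        · exact pathOK_cons (by simpa using hsp) h5
      · -- rule X → [Y, Z]
        rcases hg with ⟨hZ, hY⟩ | hY
        · -- live continuation through Z
          have prov' : (true = true) → ∀ w', ∃ cs : List (List Γ),
              cs.head? = some (Z :: β) ∧
              (∃ cl ∈ topLang ΓT, cs.getLast? = some cl) ∧ cs.length ≤ 2^n - 1 + Lc ∧
              (∀ c ∈ cs, c.length ≤ max Hc (β.length + n)) ∧ pathOK Δ σ π w' cs :=
            fun _ w' => ih b Z β Lc Hc hLc hZ hprov w'
          obtain ⟨cs, h1, h2, h3, h4, h5⟩ := ih true Y (Z :: β) (2^n - 1 + Lc)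
            (max Hc (β.length + n)) (by omega) hY prov' (w ++ [X :: β])
          obtain ⟨t0, rfl⟩ := head?_eq h1
          have hle : max (max Hc (β.length + n)) ((Z :: β).length + n) ≤
              max Hc (β.length + (n+1)) := by
            simp only [List.length_cons]
            refine max_le (max_le (le_max_left _ _) ?_) ?_
            · exact le_trans (by omega) (le_max_right _ _)
            · exact le_trans (by omega) (le_max_right _ _)
          refine ⟨(X :: β) :: (Y :: Z :: β) :: t0, rfl, last_cc h2, ?_, ?_, ?_⟩
          · simp only [List.length_cons] at h3 ⊢
            omega
          · intro c hcm
            rcases List.mem_cons.mp hcm with rfl | hcm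
            · refine le_trans ?_ (le_max_right _ _)
              simp only [List.length_cons]
              omega
            · exact le_trans (h4 c hcm) hle
          · exact pathOK_cons (by simpa using hsp) h5
        · -- dead continuation through Y
          obtain ⟨cs, h1, h2, h3, h4, h5⟩ := ih false Y (Z :: β) 1 0 le_rfl hY
            (fun h => absurd h Bool.false_ne_true) (w ++ [X :: β])
          obtain ⟨t0, rfl⟩ := head?_eq h1
          have hle : max 0 ((Z :: β).length + n) ≤ max Hc (β.length + (n+1)) := by
            simp only [List.length_cons]
            refine max_le (Nat.zero_le _) ?_
            exact le_trans (by omega) (le_max_right _ _)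
          refine ⟨(X :: β) :: (Y :: Z :: β) :: t0, rfl, last_cc h2, ?_, ?_, ?_⟩
          · simp only [List.length_cons] at h3 ⊢
            omega
          · intro c hcm
            rcases List.mem_cons.mp hcm with rfl | hcm
            · refine le_trans ?_ (le_max_right _ _)
              simp only [List.length_cons]
              omega
            · exact le_trans (h4 c hcm) hle
          · exact pathOK_cons (by simpa using hsp) h5
      · have := Δ.rule_len X _ hr
        simp only [List.length_cons] at this
        omega

end BPAshort

/-- Against the uniform strategy of player Box, from every symbol of
`W_Box(T,>0) ∩ Γ` there is a short path to `T` in the play: length at most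
`2^(2|Γ|)` and all configurations of length at most `2|Γ|`. -/
theorem uniform_strategy_short_path {Γ : Type*} [Fintype Γ] (Δ : BPA Γ)
    (ΓT : Set Γ) (σ : Δ.Strat Δ.isBox)
    (hunif : ∀ w X β α, Δ.isBox X →
      σ.f w (X :: β) α =
        if Δ.rule X α then (1 : ℝ) / ({α' | Δ.rule X α'}.ncard : ℝ) else 0)
    (X : Γ) (hX : [X] ∈ Δ.WBoxPos (topLang ΓT)) (π : Δ.Strat Δ.isDiamond) :
    ∃ cs : List (List Γ),
      cs.head? = some [X] ∧
      (∃ cl ∈ topLang ΓT, cs.getLast? = some cl) ∧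
      cs.length ≤ 2 ^ (2 * Fintype.card Γ) ∧
      (∀ c ∈ cs, c.length ≤ 2 * Fintype.card Γ) ∧
      (∀ i, i + 1 < cs.length →
        0 < Δ.stepP σ π (cs.take i) (cs.getD i []) (cs.getD (i+1) [])) := by
  classical
  have hRS : BPAshort.RS Δ ΓT [X] := BPAshort.RS_of_pos Δ ΓT X hX
  have hRK : BPAshort.Rp Δ ΓT (Fintype.card (Bool × Γ)) (false, X) := by
    rcases hRS with ⟨h, _⟩ | h
    · exact h.elim
    · exact h
  obtain ⟨cs, h1, h2, h3, h4, h5⟩ := BPAshort.rpath Δ ΓT σ π hunif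
    (Fintype.card (Bool × Γ)) false X [] 1 0 le_rfl hRK
    (fun h => absurd h Bool.false_ne_true) []
  have hN : Fintype.card (Bool × Γ) = 2 * Fintype.card Γ := by
    simp [Fintype.card_prod]
  refine ⟨cs, h1, h2, ?_, ?_, ?_⟩
  · have h1p : 1 ≤ 2 ^ Fintype.card (Bool × Γ) := Nat.one_le_two_pow
    rw [hN] at h3 h1p
    omega
  · intro c hcm
    have hc := h4 c hcm
    simp only [List.length_nil, Nat.zero_add, Nat.zero_max, hN] at hc
    exact hc
  · intro i hi
    have := h5 i hi
    simpa using this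
end

section
/- In a stochastic BPA game with simple target set T, the winning region of player Box for reaching T with probability 1 satisfies W_Box(T,=1) = B*DΓ*, where B = W_Box(T_ε,=1) ∩ Γ and D = W_Box(T,=1) ∩ Γ; consequently W_Box(T,=1) is a regular language over Γ. -/
open scoped Classical

variable {Γ : Type*} [Fintype Γ]

set_option linter.unusedSectionVars false
set_option maxHeartbeats 1000000

section
variable {Γ : Type*} [Fintype Γ]






namespace BPA
variable {Δ : BPA Γ} (σ : Δ.Strat Δ.isBox) (π : Δ.Strat Δ.isDiamond)
  (T : Set (List Γ))

lemma choice_nil (w α) : Δ.choice σ π w [] α = 0 := rfl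

lemma choice_cons (w : List (List Γ)) (X : Γ) (β α : List Γ) :
    Δ.choice σ π w (X :: β) α = if Δ.isBox X then σ.f w (X :: β) α
      else if Δ.isDiamond X then π.f w (X :: β) α else Δ.prob X α := rfl

lemma stepP_cons (w : List (List Γ)) (X : Γ) (β c' : List Γ) :
    Δ.stepP σ π w (X :: β) c' = ∑' α : List Γ,
      if α ++ β = c' ∧ Δ.rule X α then Δ.choice σ π w (X :: β) α else 0 := rfl

lemma choice_nonneg (w c α) : 0 ≤ Δ.choice σ π w c α := by
  match c with
  | [] => exact le_refl 0
  | X :: β =>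
    rw [choice_cons]
    split_ifs with h1 h2
    · exact σ.nonneg _ _ _
    · exact π.nonneg _ _ _
    · exact Δ.prob_nonneg _ _

lemma choice_tsum (w X β) : ∑' α, Δ.choice σ π w (X :: β) α = 1 := by
  rcases Δ.cover X with h | h | h
  · simp only [choice_cons, if_pos h]; exact σ.sum_one w X β h
  · have hb : ¬ Δ.isBox X := fun hb => Δ.disjBD X ⟨hb, h⟩
    simp only [choice_cons, if_neg hb, if_pos h]; exact π.sum_one w X β h
  · have hb : ¬ Δ.isBox X := fun hb => Δ.disjBC X ⟨hb, h⟩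
    have hd : ¬ Δ.isDiamond X := fun hd => Δ.disjDC X ⟨hd, h⟩
    simp only [choice_cons, if_neg hb, if_neg hd]; exact Δ.prob_sum X h

lemma choice_supp {X α} (w) (β) (h : ¬ Δ.rule X α) : Δ.choice σ π w (X :: β) α = 0 := by
  rcases Δ.cover X with ho | ho | ho
  · simp only [choice_cons, if_pos ho]
    by_contra hne; exact h (σ.supp w X β α ho hne)
  · have hb : ¬ Δ.isBox X := fun hb => Δ.disjBD X ⟨hb, ho⟩
    simp only [choice_cons, if_neg hb, if_pos ho]
    by_contra hne; exact h (π.supp w X β α ho hne)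
  · have hb : ¬ Δ.isBox X := fun hb => Δ.disjBC X ⟨hb, ho⟩
    have hd : ¬ Δ.isDiamond X := fun hd => Δ.disjDC X ⟨hd, ho⟩
    simp only [choice_cons, if_neg hb, if_neg hd]
    have := Δ.prob_supp X α ho
    have h2 : ¬ 0 < Δ.prob X α := fun hc => h (this.mp hc)
    exact le_antisymm (not_lt.mp h2) (Δ.prob_nonneg X α)

lemma choice_summable (w X β) : Summable (Δ.choice σ π w (X :: β)) := by
  by_contra h
  have := choice_tsum σ π w X β
  rw [tsum_eq_zero_of_not_summable h] at this
  norm_num at this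

lemma stepP_nil (w c') : Δ.stepP σ π w [] c' = if c' = [] then 1 else 0 := rfl

lemma stepP_apply (w X β α) :
    Δ.stepP σ π w (X :: β) (α ++ β)
      = if Δ.rule X α then Δ.choice σ π w (X :: β) α else 0 := by
  rw [stepP_cons, tsum_eq_single α]
  · simp
  · intro α' hne
    rw [if_neg]
    rintro ⟨h1, -⟩
    exact hne (List.append_left_injective β h1)

lemma stepP_eq_zero {X β c'} (w) (h : ∀ α, c' ≠ α ++ β) :
    Δ.stepP σ π w (X :: β) c' = 0 := by
  rw [stepP_cons]
  convert tsum_zero with α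
  rw [if_neg]; rintro ⟨h1, -⟩; exact h α h1.symm

lemma stepP_nonneg (w c c') : 0 ≤ Δ.stepP σ π w c c' := by
  match c with
  | [] => rw [stepP_nil]; positivity
  | X :: β =>
    rw [stepP_cons]
    refine tsum_nonneg fun α => ?_
    split_ifs
    · exact choice_nonneg σ π w _ α
    · rfl

lemma stepP_ne_zero {X β c'} (w) (h : Δ.stepP σ π w (X :: β) c' ≠ 0) :
    ∃ α, α ++ β = c' ∧ Δ.rule X α := by
  by_contra hc
  push_neg at hc
  refine h ?_
  rw [stepP_cons]
  convert tsum_zero with α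
  rw [if_neg]; rintro ⟨h1, h2⟩; exact hc α h1 h2

lemma stepP_summable (w c) : Summable (Δ.stepP σ π w c) := by
  match c with
  | [] =>
    apply summable_of_ne_finset_zero (s := {([] : List Γ)})
    intro c' hc'
    simp only [Finset.mem_singleton] at hc'
    simp [BPA.stepP, hc']
  | X :: β =>
    have hinj : Function.Injective (fun α : List Γ => α ++ β) :=
      List.append_left_injective β
    have hsupp : ∀ c' ∉ Set.range (fun α : List Γ => α ++ β),
        Δ.stepP σ π w (X :: β) c' = 0 := by
      intro c' hc'
      refine stepP_eq_zero σ π w fun α hα => hc' ⟨α, hα.symm⟩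
    refine (hinj.summable_iff hsupp).mp ?_
    apply Summable.of_nonneg_of_le
      (fun α => stepP_nonneg σ π w _ _) (fun α => ?_) (choice_summable σ π w X β)
    show Δ.stepP σ π w (X :: β) (α ++ β) ≤ _
    rw [stepP_apply]
    split_ifs
    · exact le_refl _
    · exact choice_nonneg σ π w _ α

lemma stepP_tsum (w c) : ∑' c', Δ.stepP σ π w c c' = 1 := by
  match c with
  | [] => exact tsum_ite_eq ([] : List Γ) 1
  | X :: β =>
    have hinj : Function.Injective (fun α : List Γ => α ++ β) :=
      List.append_left_injective β
    have hsupp : Function.support (Δ.stepP σ π w (X :: β))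
        ⊆ Set.range (fun α : List Γ => α ++ β) := by
      intro c' hc'
      simp only [Function.mem_support] at hc'
      by_contra hy
      simp only [Set.mem_range] at hy
      push_neg at hy
      exact hc' (stepP_eq_zero σ π w fun α hα => hy α hα.symm)
    rw [← hinj.tsum_eq hsupp, ← choice_tsum σ π w X β]
    congr 1
    funext α
    show Δ.stepP σ π w (X :: β) (α ++ β) = _
    rw [stepP_apply]
    split_ifs with h
    · rfl
    · exact (choice_supp σ π w β h).symm

lemma reachN_zero (w c) : Δ.reachN σ π T 0 w c = if c ∈ T then 1 else 0 := rfl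

lemma reachN_succ (n w c) : Δ.reachN σ π T (n+1) w c = if c ∈ T then 1 else
    ∑' c', Δ.stepP σ π w c c' * Δ.reachN σ π T n (w ++ [c]) c' := rfl

lemma reachN_of_mem {c} (n w) (hc : c ∈ T) : Δ.reachN σ π T n w c = 1 := by
  cases n
  · rw [reachN_zero, if_pos hc]
  · rw [reachN_succ, if_pos hc]

lemma reachN_nonneg (n) : ∀ w c, 0 ≤ Δ.reachN σ π T n w c := by
  induction n with
  | zero => intro w c; rw [reachN_zero]; positivity
  | succ n ih =>
    intro w c
    rw [reachN_succ]
    split_ifs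
    · norm_num
    · exact tsum_nonneg fun c' => mul_nonneg (stepP_nonneg σ π w c c') (ih _ c')

lemma reachN_le_one (n) : ∀ w c, Δ.reachN σ π T n w c ≤ 1 := by
  induction n with
  | zero => intro w c; rw [reachN_zero]; split_ifs <;> norm_num
  | succ n ih =>
    intro w c
    rw [reachN_succ]
    split_ifs
    · exact le_refl 1
    · calc ∑' c', Δ.stepP σ π w c c' * Δ.reachN σ π T n (w ++ [c]) c'
          ≤ ∑' c', Δ.stepP σ π w c c' := by
            refine Summable.tsum_le_tsum (fun c' => ?_) ?_ (stepP_summable σ π w c)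
            · exact mul_le_of_le_one_right (stepP_nonneg σ π w c c') (ih _ c')
            · exact Summable.of_nonneg_of_le
                (fun c' => mul_nonneg (stepP_nonneg σ π w c c')
                  (reachN_nonneg σ π T n _ c'))
                (fun c' => mul_le_of_le_one_right (stepP_nonneg σ π w c c') (ih _ c'))
                (stepP_summable σ π w c)
        _ = 1 := stepP_tsum σ π w c

lemma reachN_mul_summable (n w w' c) :
    Summable (fun c' => Δ.stepP σ π w c c' * Δ.reachN σ π T n w' c') := by
  refine Summable.of_nonneg_of_le
    (fun c' => mul_nonneg (stepP_nonneg σ π w c c') (reachN_nonneg σ π T n w' c'))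
    (fun c' => mul_le_of_le_one_right (stepP_nonneg σ π w c c') (reachN_le_one σ π T n w' c'))
    (stepP_summable σ π w c)

lemma reachN_mono_succ (n) : ∀ w c, Δ.reachN σ π T n w c ≤ Δ.reachN σ π T (n+1) w c := by
  induction n with
  | zero =>
    intro w c
    rw [reachN_zero, reachN_succ]
    split_ifs
    · exact le_refl 1
    · exact tsum_nonneg fun c' => mul_nonneg (stepP_nonneg σ π w c c')
        (reachN_nonneg σ π T 0 _ c')
  | succ n ih =>
    intro w c
    rw [reachN_succ, reachN_succ]
    split_ifs
    · exact le_refl 1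
    · exact Summable.tsum_le_tsum
        (fun c' => mul_le_mul_of_nonneg_left (ih _ c') (stepP_nonneg σ π w c c'))
        (reachN_mul_summable σ π T n w _ c) (reachN_mul_summable σ π T (n+1) w _ c)

lemma reachN_mono {m n : ℕ} (h : m ≤ n) (w c) :
    Δ.reachN σ π T m w c ≤ Δ.reachN σ π T n w c := by
  induction n with
  | zero => rw [Nat.le_zero.mp h]
  | succ n ih =>
    rcases Nat.lt_or_ge m (n+1) with h' | h'
    · exact (ih (Nat.lt_succ_iff.mp h')).trans (reachN_mono_succ σ π T n w c)
    · rw [Nat.le_antisymm h h']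

/-- The value `⨆ n, reachN n w c` of a configuration after a history. -/
noncomputable def val (Δ : BPA Γ) (σ : Δ.Strat Δ.isBox) (π : Δ.Strat Δ.isDiamond)
    (T : Set (List Γ)) (w : List (List Γ)) (c : List Γ) : ℝ :=
  ⨆ n, Δ.reachN σ π T n w c

lemma val_bddAbove (w c) : BddAbove (Set.range fun n => Δ.reachN σ π T n w c) :=
  ⟨1, by rintro x ⟨n, rfl⟩; exact reachN_le_one σ π T n w c⟩

lemma reachN_le_val (n w c) : Δ.reachN σ π T n w c ≤ Δ.val σ π T w c :=
  le_ciSup (val_bddAbove σ π T w c) n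

lemma val_le_one (w c) : Δ.val σ π T w c ≤ 1 :=
  ciSup_le fun n => reachN_le_one σ π T n w c

lemma val_nonneg (w c) : 0 ≤ Δ.val σ π T w c :=
  (reachN_nonneg σ π T 0 w c).trans (reachN_le_val σ π T 0 w c)

lemma val_of_mem {c} (w) (hc : c ∈ T) : Δ.val σ π T w c = 1 := by
  unfold val
  simp only [fun n => reachN_of_mem σ π T (c := c) n w hc]
  exact ciSup_const

lemma val_bellman {c} (w) (hc : c ∉ T) :
    ∑' c', Δ.stepP σ π w c c' * Δ.val σ π T (w ++ [c]) c' ≤ Δ.val σ π T w c := by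
  have hsum : Summable (fun c' => Δ.stepP σ π w c c' * Δ.val σ π T (w ++ [c]) c') :=
    Summable.of_nonneg_of_le
      (fun c' => mul_nonneg (stepP_nonneg σ π w c c') (val_nonneg σ π T _ c'))
      (fun c' => mul_le_of_le_one_right (stepP_nonneg σ π w c c') (val_le_one σ π T _ c'))
      (stepP_summable σ π w c)
  refine Summable.tsum_le_of_sum_le hsum fun F => ?_
  refine le_of_forall_pos_le_add fun ε hε => ?_
  have hex : ∀ c' : List Γ, ∃ n, Δ.val σ π T (w ++ [c]) c'
      ≤ Δ.reachN σ π T n (w ++ [c]) c' + ε := by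
    intro c'
    have : Δ.val σ π T (w ++ [c]) c' - ε < Δ.val σ π T (w ++ [c]) c' := by linarith
    obtain ⟨n, hn⟩ := exists_lt_of_lt_ciSup this
    exact ⟨n, by linarith⟩
  choose nf hnf using hex
  set N := F.sup nf with hN
  have h1 : ∀ c' ∈ F, Δ.val σ π T (w ++ [c]) c'
      ≤ Δ.reachN σ π T N (w ++ [c]) c' + ε := fun c' hc' =>
    (hnf c').trans (by
      have := reachN_mono σ π T (Finset.le_sup hc' (f := nf)) (w ++ [c]) c'
      linarith)
  calc ∑ c' ∈ F, Δ.stepP σ π w c c' * Δ.val σ π T (w ++ [c]) c'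
      ≤ ∑ c' ∈ F, (Δ.stepP σ π w c c' * Δ.reachN σ π T N (w ++ [c]) c'
          + Δ.stepP σ π w c c' * ε) := by
        refine Finset.sum_le_sum fun c' hc' => ?_
        rw [← mul_add]
        exact mul_le_mul_of_nonneg_left (h1 c' hc') (stepP_nonneg σ π w c c')
    _ = ∑ c' ∈ F, Δ.stepP σ π w c c' * Δ.reachN σ π T N (w ++ [c]) c'
          + (∑ c' ∈ F, Δ.stepP σ π w c c') * ε := by
        rw [Finset.sum_add_distrib, Finset.sum_mul]
    _ ≤ Δ.val σ π T w c + 1 * ε := by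
        gcongr
        · calc ∑ c' ∈ F, Δ.stepP σ π w c c' * Δ.reachN σ π T N (w ++ [c]) c'
              ≤ ∑' c', Δ.stepP σ π w c c' * Δ.reachN σ π T N (w ++ [c]) c' :=
                Summable.sum_le_tsum F (fun c' _ => mul_nonneg (stepP_nonneg σ π w c c')
                  (reachN_nonneg σ π T N _ c')) (reachN_mul_summable σ π T N w _ c)
            _ = Δ.reachN σ π T (N+1) w c := by rw [reachN_succ, if_neg hc]
            _ ≤ Δ.val σ π T w c := reachN_le_val σ π T (N+1) w c
        · calc ∑ c' ∈ F, Δ.stepP σ π w c c'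
              ≤ ∑' c', Δ.stepP σ π w c c' :=
                Summable.sum_le_tsum F (fun c' _ => stepP_nonneg σ π w c c') (stepP_summable σ π w c)
            _ = 1 := stepP_tsum σ π w c
    _ = Δ.val σ π T w c + ε := by ring_nf

lemma reachN_nil (hT : ([] : List Γ) ∉ T) (n) : ∀ w, Δ.reachN σ π T n w [] = 0 := by
  induction n with
  | zero => intro w; rw [reachN_zero, if_neg hT]
  | succ n ih =>
    intro w
    rw [reachN_succ, if_neg hT]
    rw [show (fun c' => Δ.stepP σ π w [] c' * Δ.reachN σ π T n (w ++ [[]]) c')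
        = (fun c' => if c' = [] then Δ.reachN σ π T n (w ++ [[]]) [] else 0) from ?_]
    · rw [tsum_ite_eq, ih]
    · funext c'
      rw [stepP_nil]
      split_ifs with h
      · subst h; rw [one_mul]
      · rw [zero_mul]

lemma val_nil (hT : ([] : List Γ) ∉ T) (w) : Δ.val σ π T w [] = 0 := by
  unfold val
  simp only [fun n => reachN_nil σ π T hT n w]
  exact ciSup_const

/-- Generic transfer: if two strategy pairs agree (up to translating the
history by a fixed prefix `w₀`) along an invariant that is stable under
steps, the finite-horizon reachability values coincide. -/
lemma reachN_congr (σ' : Δ.Strat Δ.isBox) (π' : Δ.Strat Δ.isDiamond)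
    (w₀ : List (List Γ)) (Inv : List (List Γ) → List Γ → Prop)
    (hInv0 : ∀ u, Inv u [] → Inv (u ++ [[]]) [])
    (hInv : ∀ u X β α, Inv u (X :: β) → (X :: β) ∉ T → Δ.rule X α →
      Inv (u ++ [X :: β]) (α ++ β))
    (hag : ∀ u c α, Inv u c → c ∉ T →
      Δ.choice σ' π' u c α = Δ.choice σ π (w₀ ++ u) c α) :
    ∀ n u c, Inv u c → Δ.reachN σ' π' T n u c = Δ.reachN σ π T n (w₀ ++ u) c := by
  intro n
  induction n with
  | zero => intro u c _; rw [reachN_zero, reachN_zero]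
  | succ n ih =>
    intro u c hI
    rw [reachN_succ, reachN_succ]
    by_cases hc : c ∈ T
    · rw [if_pos hc, if_pos hc]
    · rw [if_neg hc, if_neg hc]
      match c with
      | [] =>
        refine tsum_congr fun c' => ?_
        rw [stepP_nil, stepP_nil]
        split_ifs with h
        · subst h
          rw [one_mul, one_mul, List.append_assoc]
          exact ih (u ++ [[]]) [] (hInv0 u hI)
        · rw [zero_mul, zero_mul]
      | X :: β =>
        refine tsum_congr fun c' => ?_
        have hstep : Δ.stepP σ' π' u (X :: β) c' = Δ.stepP σ π (w₀ ++ u) (X :: β) c' := by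
          rw [stepP_cons, stepP_cons]
          refine tsum_congr fun α => ?_
          split_ifs with h
          · exact hag u (X :: β) α hI hc
          · rfl
        rw [hstep]
        by_cases hz : Δ.stepP σ π (w₀ ++ u) (X :: β) c' = 0
        · rw [hz, zero_mul, zero_mul]
        · obtain ⟨α, hα, hr⟩ := stepP_ne_zero σ π (w₀ ++ u) hz
          congr 1
          subst hα
          rw [List.append_assoc]
          exact ih (u ++ [X :: β]) (α ++ β) (hInv u X β α hI hc hr)

end BPA

/-- Remove the suffix `γ` from a configuration. -/
def stripc (γ c : List Γ) : List Γ := c.take (c.length - γ.length)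

lemma strip_append (γ d : List Γ) : stripc γ (d ++ γ) = d := by
  unfold stripc
  rw [List.length_append, Nat.add_sub_cancel, List.take_left]

/-- The phase-1 predicate: the configuration still carries `γ` as a proper suffix. -/
noncomputable def PhP (γ : List Γ) : List Γ → Bool := fun u => decide (γ <:+ u ∧ u ≠ γ)

lemma PhP_append {d : List Γ} (γ : List Γ) (hd : d ≠ []) : PhP γ (d ++ γ) = true := by
  refine decide_eq_true ⟨⟨d, rfl⟩, fun h => hd ?_⟩
  have := congrArg List.length h
  rw [List.length_append] at this
  exact List.eq_nil_of_length_eq_zero (by omega)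

lemma PhP_self (γ : List Γ) : PhP γ γ = false := by
  simp [PhP]

lemma exists_strip {γ c : List Γ} (h1 : γ <:+ c) (h2 : c ≠ γ) :
    ∃ d, d ≠ [] ∧ c = d ++ γ := by
  obtain ⟨d, hd⟩ := h1
  refine ⟨d, fun hne => ?_, hd.symm⟩
  subst hne
  exact h2 (by simpa using hd.symm)

lemma strip_cons {γ β : List Γ} {X : Γ}
    (h1 : γ <:+ (X :: β)) (h2 : (X :: β) ≠ γ) :
    ∃ d', stripc γ (X :: β) = X :: d' ∧ (X :: β) = (X :: d') ++ γ := by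
  obtain ⟨d, hdne, hdeq⟩ := exists_strip h1 h2
  match d, hdne with
  | Y :: d', _ =>
    rw [List.cons_append] at hdeq
    injection hdeq with hx hβ
    subst hx; subst hβ
    exact ⟨d', by rw [← List.cons_append, strip_append], by rw [List.cons_append]⟩

lemma takeWhile_all {α : Type*} {p : α → Bool} :
    ∀ {w : List α}, (∀ u ∈ w, p u = true) → w.takeWhile p = w := by
  intro w
  induction w with
  | nil => intro; rfl
  | cons x w ih =>
    intro h
    rw [List.takeWhile_cons_of_pos (h x (by simp)), ih fun u hu => h u (by simp [hu])]

lemma takeWhile_break {α : Type*} {p : α → Bool} {a : α} :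
    ∀ {w : List α}, (∀ u ∈ w, p u = true) → p a = false → ∀ u,
      (w ++ a :: u).takeWhile p = w := by
  intro w
  induction w with
  | nil =>
    intro _ ha u
    rw [List.nil_append, List.takeWhile_cons_of_neg (by simp [ha])]
  | cons x w ih =>
    intro h ha u
    rw [List.cons_append, List.takeWhile_cons_of_pos (h x (by simp)),
      ih (fun v hv => h v (by simp [hv])) ha u]

/-- Append `γ` to every configuration in a history. -/
def liftH (γ : List Γ) (ws : List (List Γ)) : List (List Γ) := ws.map (· ++ γ)

lemma liftH_append (γ : List Γ) (ws : List (List Γ)) (d : List Γ) :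
    liftH γ (ws ++ [d]) = liftH γ ws ++ [d ++ γ] := by simp [liftH]

lemma liftH_allP (γ : List Γ) {ws : List (List Γ)} (h : ∀ d ∈ ws, d ≠ []) :
    ∀ u ∈ liftH γ ws, PhP γ u = true := by
  intro u hu
  obtain ⟨d, hd, rfl⟩ := List.mem_map.mp hu
  exact PhP_append γ (h d hd)

lemma takeWhile_liftH (γ : List Γ) {ws : List (List Γ)} (h : ∀ d ∈ ws, d ≠ []) :
    (liftH γ ws).takeWhile (PhP γ) = liftH γ ws :=
  takeWhile_all (liftH_allP γ h)

lemma map_strip_liftH (γ : List Γ) (ws : List (List Γ)) :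
    (liftH γ ws).map (stripc γ) = ws := by
  unfold liftH
  rw [List.map_map]
  have : stripc γ ∘ (· ++ γ) = id := by
    funext d; exact strip_append γ d
  rw [this, List.map_id]

namespace BPA
variable {Δ : BPA Γ}

/-- A default (deterministic, memoryless) strategy. -/
noncomputable def Strat.dflt (Δ : BPA Γ) (own : Γ → Prop) : Δ.Strat own where
  f _ c α :=
    match c with
    | [] => if α = [] then 1 else 0
    | X :: _ => if α = Classical.choose (Δ.rule_total X) then 1 else 0
  nonneg w c α := by
    match c with
    | [] => dsimp only; split_ifs <;> norm_num
    | X :: β => dsimp only; split_ifs <;> norm_num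
  supp w X β α _ h := by
    dsimp only at h
    split_ifs at h with hα
    · subst hα; exact Classical.choose_spec (Δ.rule_total X)
    · exact absurd rfl h
  sum_one w X β _ := by
    dsimp only
    exact tsum_ite_eq _ 1

/-- The residual strategy after a fixed history prefix. -/
def Strat.res {own : Γ → Prop} (σ : Δ.Strat own) (h : List (List Γ)) : Δ.Strat own where
  f u c α := σ.f (h ++ u) c α
  nonneg u c α := σ.nonneg _ c α
  supp u X β α h1 h2 := σ.supp _ X β α h1 h2
  sum_one u X β h1 := σ.sum_one _ X β h1

/-- Project a strategy of the lifted game (`· ++ γ`) to the head game. -/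
def Strat.proj {own : Γ → Prop} (σ : Δ.Strat own) (γ : List Γ) : Δ.Strat own where
  f ws d α := σ.f (liftH γ ws) (d ++ γ) α
  nonneg ws d α := σ.nonneg _ _ α
  supp ws X β α h1 h2 := σ.supp _ X (β ++ γ) α h1 (by rwa [← List.cons_append])
  sum_one ws X β h1 := by
    have := σ.sum_one (liftH γ ws) X (β ++ γ) h1
    rwa [← List.cons_append] at this

/-- Compose a strategy for the head game with a family of continuation
strategies (selected according to the phase-1 history). -/
noncomputable def Strat.comp {own : Γ → Prop} (σX : Δ.Strat own)
    (Φ : List (List Γ) → Δ.Strat own) (γ : List Γ) : Δ.Strat own where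
  f w c α := if γ <:+ c ∧ c ≠ γ ∧ w.takeWhile (PhP γ) = w
    then σX.f (w.map (stripc γ)) (stripc γ c) α
    else (Φ (w.takeWhile (PhP γ))).f (w.drop (w.takeWhile (PhP γ)).length) c α
  nonneg w c α := by
    split_ifs
    · exact σX.nonneg _ _ α
    · exact (Φ _).nonneg _ _ α
  supp w X β α h1 h2 := by
    split_ifs at h2 with hcond
    · obtain ⟨d', hs, -⟩ := strip_cons hcond.1 hcond.2.1
      rw [hs] at h2
      exact σX.supp _ X d' α h1 h2
    · exact (Φ _).supp _ X β α h1 h2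
  sum_one w X β h1 := by
    by_cases hcond : γ <:+ (X :: β) ∧ (X :: β) ≠ γ ∧ w.takeWhile (PhP γ) = w
    · simp only [if_pos hcond]
      obtain ⟨d', hs, -⟩ := strip_cons hcond.1 hcond.2.1
      rw [hs]
      exact σX.sum_one _ X d' h1
    · simp only [if_neg hcond]
      exact (Φ _).sum_one _ X β h1

end BPA
namespace BPA

variable {Δ : BPA Γ}

lemma append_ne_of_ne_nil {d : List Γ} (γ : List Γ) (hd : d ≠ []) : d ++ γ ≠ γ := by
  intro h
  have := congrArg List.length h
  rw [List.length_append] at this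
  exact hd (List.eq_nil_of_length_eq_zero (by omega))

/-- Agreement of one-step choices between the head game and the lifted game. -/
lemma choice_lift_eq (σX σ : Δ.Strat Δ.isBox) (π : Δ.Strat Δ.isDiamond)
    (γ : List Γ) (ws : List (List Γ)) (X : Γ) (β α : List Γ)
    (hσ : σ.f (liftH γ ws) ((X :: β) ++ γ) α = σX.f ws (X :: β) α) :
    Δ.choice σX (π.proj γ) ws (X :: β) α
      = Δ.choice σ π (liftH γ ws) ((X :: β) ++ γ) α := by
  rw [List.cons_append, choice_cons, choice_cons]
  split_ifs with h1 h2
  · rw [← List.cons_append, hσ]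
  · rfl
  · rfl

lemma stepP_lift_eq (σX σ : Δ.Strat Δ.isBox) (π : Δ.Strat Δ.isDiamond)
    (γ : List Γ) (ws : List (List Γ)) (X : Γ) (β c' : List Γ)
    (hσ : ∀ α, σ.f (liftH γ ws) ((X :: β) ++ γ) α = σX.f ws (X :: β) α) :
    Δ.stepP σX (π.proj γ) ws (X :: β) c'
      = Δ.stepP σ π (liftH γ ws) ((X :: β) ++ γ) (c' ++ γ) := by
  rw [List.cons_append, stepP_cons, stepP_cons]
  refine tsum_congr fun α => ?_
  have hiff : α ++ β = c' ∧ Δ.rule X α ↔ α ++ (β ++ γ) = c' ++ γ ∧ Δ.rule X α := by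
    constructor
    · rintro ⟨h, hr⟩; exact ⟨by rw [← List.append_assoc, h], hr⟩
    · rintro ⟨h, hr⟩
      rw [← List.append_assoc] at h
      exact ⟨List.append_left_injective γ h, hr⟩
  split_ifs with h1 h2 h2
  · have := choice_lift_eq σX σ π γ ws X β α (hσ α)
    rw [List.cons_append] at this
    exact this
  · exact absurd (hiff.mp h1) h2
  · exact absurd (hiff.mpr h2) h1
  · rfl

/-- Claim B: finite-horizon values of the head game bound the value of the
lifted game from below, provided reaching the empty head configuration is
accounted for by `hnil`. -/
lemma reachN_head_le_val (σX σ : Δ.Strat Δ.isBox) (π : Δ.Strat Δ.isDiamond)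
    (ΓT : Set Γ) (T S : Set (List Γ)) (γ : List Γ)
    (hT : ∀ (X : Γ) (β : List Γ), X :: β ∈ T ↔ X ∈ ΓT)
    (hS : ∀ (X : Γ) (β : List Γ), X :: β ∈ S ↔ X ∈ ΓT)
    (hσ : ∀ ws (d : List Γ) α, (∀ u ∈ ws, u ≠ ([] : List Γ)) → d ≠ [] →
      σ.f (liftH γ ws) (d ++ γ) α = σX.f ws d α)
    (hnil : ∀ n ws, (∀ u ∈ ws, u ≠ ([] : List Γ)) →
      Δ.reachN σX (π.proj γ) S n ws [] ≤ Δ.val σ π T (liftH γ ws) γ) :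
    ∀ n ws d, (∀ u ∈ ws, u ≠ ([] : List Γ)) →
      Δ.reachN σX (π.proj γ) S n ws d ≤ Δ.val σ π T (liftH γ ws) (d ++ γ) := by
  intro n
  induction n with
  | zero =>
    intro ws d hws
    match d with
    | [] => simpa using hnil 0 ws hws
    | X :: β =>
      rw [reachN_zero]
      split_ifs with hmem
      · have : (X :: β) ++ γ ∈ T := by
          rw [List.cons_append]; exact (hT X (β ++ γ)).mpr ((hS X β).mp hmem)
        rw [val_of_mem σ π T _ this]
      · exact val_nonneg σ π T _ _
  | succ n ih =>
    intro ws d hws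
    match d with
    | [] => simpa using hnil (n+1) ws hws
    | X :: β =>
      by_cases hmem : (X :: β) ∈ S
      · rw [reachN_of_mem _ _ _ _ _ hmem]
        have : (X :: β) ++ γ ∈ T := by
          rw [List.cons_append]; exact (hT X (β ++ γ)).mpr ((hS X β).mp hmem)
        rw [val_of_mem σ π T _ this]
      · have hmemT : (X :: β) ++ γ ∉ T := by
          rw [List.cons_append]
          intro hc
          exact hmem ((hS X β).mpr ((hT X (β ++ γ)).mp hc))
        rw [reachN_succ, if_neg hmem]
        have hterm : ∀ c' : List Γ,
            Δ.stepP σX (π.proj γ) ws (X :: β) c'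
              * Δ.reachN σX (π.proj γ) S n (ws ++ [X :: β]) c'
            ≤ Δ.stepP σ π (liftH γ ws) ((X :: β) ++ γ) (c' ++ γ)
              * Δ.val σ π T (liftH γ ws ++ [(X :: β) ++ γ]) (c' ++ γ) := by
          intro c'
          rw [← liftH_append, ← stepP_lift_eq σX σ π γ ws X β c'
            (fun α => hσ ws (X :: β) α hws (by simp))]
          refine mul_le_mul_of_nonneg_left ?_ (stepP_nonneg _ _ _ _ _)
          have hws' : ∀ u ∈ ws ++ [X :: β], u ≠ ([] : List Γ) := by
            intro u hu
            rcases List.mem_append.mp hu with h | h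
            · exact hws u h
            · simp only [List.mem_singleton] at h; subst h; simp
          match c' with
          | [] => simpa using hnil n (ws ++ [X :: β]) hws'
          | Y :: β' => exact ih (ws ++ [X :: β]) (Y :: β') hws'
        calc ∑' c', Δ.stepP σX (π.proj γ) ws (X :: β) c'
              * Δ.reachN σX (π.proj γ) S n (ws ++ [X :: β]) c'
            ≤ ∑' c'', Δ.stepP σ π (liftH γ ws) ((X :: β) ++ γ) c''
              * Δ.val σ π T (liftH γ ws ++ [(X :: β) ++ γ]) c'' := by
              refine Summable.tsum_le_tsum_of_inj (fun c' => c' ++ γ)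
                (List.append_left_injective γ) (fun c'' _ => mul_nonneg
                  (stepP_nonneg _ _ _ _ _) (val_nonneg _ _ _ _ _)) hterm
                (reachN_mul_summable _ _ _ _ _ _ _) ?_
              exact Summable.of_nonneg_of_le
                (fun c'' => mul_nonneg (stepP_nonneg _ _ _ _ _) (val_nonneg _ _ _ _ _))
                (fun c'' => mul_le_of_le_one_right (stepP_nonneg _ _ _ _ _)
                  (val_le_one _ _ _ _ _))
                (stepP_summable _ _ _ _)
          _ ≤ Δ.val σ π T (liftH γ ws) ((X :: β) ++ γ) :=
              val_bellman σ π T (liftH γ ws) hmemT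

/-- Finite-horizon value of the head game where popping the head (reaching
`ε`) gives reward `R` applied to the current history. -/
noncomputable def popval (Δ : BPA Γ) (σ : Δ.Strat Δ.isBox) (π : Δ.Strat Δ.isDiamond)
    (T : Set (List Γ)) (R : List (List Γ) → ℝ) :
    ℕ → List (List Γ) → List Γ → ℝ
  | 0, ws, d => if d ∈ T then 1 else if d = [] then R ws else 0
  | n+1, ws, d => if d ∈ T then 1 else if d = [] then R ws else
      ∑' d', Δ.stepP σ π ws d d' * popval Δ σ π T R n (ws ++ [d]) d'

variable (σ : Δ.Strat Δ.isBox) (π : Δ.Strat Δ.isDiamond) (T : Set (List Γ))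
  (R : List (List Γ) → ℝ)

lemma popval_zero (ws d) : Δ.popval σ π T R 0 ws d
    = if d ∈ T then 1 else if d = [] then R ws else 0 := rfl

lemma popval_succ (n ws d) : Δ.popval σ π T R (n+1) ws d
    = if d ∈ T then 1 else if d = [] then R ws else
      ∑' d', Δ.stepP σ π ws d d' * Δ.popval σ π T R n (ws ++ [d]) d' := rfl

lemma popval_nil (hT : ([] : List Γ) ∉ T) (n ws) :
    Δ.popval σ π T R n ws [] = R ws := by
  cases n
  · rw [popval_zero, if_neg hT, if_pos rfl]
  · rw [popval_succ, if_neg hT, if_pos rfl]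

lemma popval_of_mem {d} (n ws) (hd : d ∈ T) : Δ.popval σ π T R n ws d = 1 := by
  cases n
  · rw [popval_zero, if_pos hd]
  · rw [popval_succ, if_pos hd]

lemma popval_nonneg (hR : ∀ ws, 0 ≤ R ws) (n) : ∀ ws d, 0 ≤ Δ.popval σ π T R n ws d := by
  induction n with
  | zero =>
    intro ws d
    rw [popval_zero]
    split_ifs
    · norm_num
    · exact hR ws
    · rfl
  | succ n ih =>
    intro ws d
    rw [popval_succ]
    split_ifs
    · norm_num
    · exact hR ws
    · exact tsum_nonneg fun d' => mul_nonneg (stepP_nonneg _ _ _ _ _) (ih _ d')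

lemma popval_le_one (hR0 : ∀ ws, 0 ≤ R ws) (hR : ∀ ws, R ws ≤ 1) (n) :
    ∀ ws d, Δ.popval σ π T R n ws d ≤ 1 := by
  induction n with
  | zero =>
    intro ws d
    rw [popval_zero]
    split_ifs
    · exact le_refl 1
    · exact hR ws
    · norm_num
  | succ n ih =>
    intro ws d
    rw [popval_succ]
    split_ifs
    · exact le_refl 1
    · exact hR ws
    · calc ∑' d', Δ.stepP σ π ws d d' * Δ.popval σ π T R n (ws ++ [d]) d'
          ≤ ∑' d', Δ.stepP σ π ws d d' := by
            refine Summable.tsum_le_tsum (fun d' => mul_le_of_le_one_right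
              (stepP_nonneg _ _ _ _ _) (ih _ d')) ?_ (stepP_summable σ π ws d)
            exact Summable.of_nonneg_of_le
              (fun d' => mul_nonneg (stepP_nonneg _ _ _ _ _)
                (popval_nonneg σ π T R hR0 n _ d'))
              (fun d' => mul_le_of_le_one_right (stepP_nonneg _ _ _ _ _) (ih _ d'))
              (stepP_summable σ π ws d)
        _ = 1 := stepP_tsum σ π ws d

lemma popval_mul_summable (hR0 : ∀ ws, 0 ≤ R ws) (hR : ∀ ws, R ws ≤ 1) (n ws ws' d) :
    Summable (fun d' => Δ.stepP σ π ws d d' * Δ.popval σ π T R n ws' d') :=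
  Summable.of_nonneg_of_le
    (fun d' => mul_nonneg (stepP_nonneg _ _ _ _ _) (popval_nonneg σ π T R hR0 n _ d'))
    (fun d' => mul_le_of_le_one_right (stepP_nonneg _ _ _ _ _)
      (popval_le_one σ π T R hR0 hR n _ d'))
    (stepP_summable σ π ws d)

lemma popval_one (hT : ([] : List Γ) ∉ T) (n) :
    ∀ ws d, Δ.popval σ π T (fun _ => 1) n ws d
      = Δ.reachN σ π (T ∪ {([] : List Γ)}) n ws d := by
  induction n with
  | zero =>
    intro ws d
    rw [popval_zero, reachN_zero]
    by_cases h1 : d ∈ T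
    · rw [if_pos h1, if_pos (Set.mem_union_left _ h1)]
    · by_cases h2 : d = []
      · subst h2
        rw [if_neg h1, if_pos rfl, if_pos (show ([] : List Γ) ∈ T ∪ {([] : List Γ)} by simp)]
      · rw [if_neg h1, if_neg h2, if_neg ?_]
        rintro (hc | hc)
        · exact h1 hc
        · exact h2 hc
  | succ n ih =>
    intro ws d
    rw [popval_succ, reachN_succ]
    by_cases h1 : d ∈ T
    · rw [if_pos h1, if_pos (Set.mem_union_left _ h1)]
    · by_cases h2 : d = []
      · subst h2
        rw [if_neg h1, if_pos rfl, if_pos (show ([] : List Γ) ∈ T ∪ {([] : List Γ)} by simp)]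
      · rw [if_neg h1, if_neg h2, if_neg ?_]
        · exact tsum_congr fun d' => by rw [ih]
        · rintro (hc | hc)
          · exact h1 hc
          · exact h2 hc

lemma popval_monoR {R' : List (List Γ) → ℝ}
    (hR0 : ∀ ws, 0 ≤ R ws) (hR1 : ∀ ws, R' ws ≤ 1)
    (hRR : ∀ ws, R ws ≤ R' ws) (n) :
    ∀ ws d, Δ.popval σ π T R n ws d ≤ Δ.popval σ π T R' n ws d := by
  induction n with
  | zero =>
    intro ws d
    rw [popval_zero, popval_zero]
    split_ifs
    · exact le_refl 1
    · exact hRR ws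
    · exact le_refl 0
  | succ n ih =>
    intro ws d
    rw [popval_succ, popval_succ]
    split_ifs
    · exact le_refl 1
    · exact hRR ws
    · refine Summable.tsum_le_tsum (fun d' => mul_le_mul_of_nonneg_left (ih _ d')
        (stepP_nonneg _ _ _ _ _)) ?_ ?_
      · exact popval_mul_summable σ π T R hR0
          (fun ws => (hRR ws).trans (hR1 ws)) n ws _ d
      · exact popval_mul_summable σ π T R'
          (fun ws => (hR0 ws).trans (hRR ws)) hR1 n ws _ d

lemma popval_mono_n (hR0 : ∀ ws, 0 ≤ R ws) (hR1 : ∀ ws, R ws ≤ 1) (n) :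
    ∀ ws d, Δ.popval σ π T R n ws d ≤ Δ.popval σ π T R (n+1) ws d := by
  induction n with
  | zero =>
    intro ws d
    rw [popval_zero, popval_succ]
    split_ifs
    · exact le_refl 1
    · exact le_refl _
    · exact tsum_nonneg fun d' => mul_nonneg (stepP_nonneg _ _ _ _ _)
        (popval_nonneg σ π T R hR0 0 _ d')
  | succ n ih =>
    intro ws d
    rw [popval_succ, popval_succ]
    split_ifs
    · exact le_refl 1
    · exact le_refl _
    · exact Summable.tsum_le_tsum (fun d' => mul_le_mul_of_nonneg_left (ih _ d')
        (stepP_nonneg _ _ _ _ _))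
        (popval_mul_summable σ π T R hR0 hR1 n ws _ d)
        (popval_mul_summable σ π T R hR0 hR1 (n+1) ws _ d)

lemma popval_mono_le (hR0 : ∀ ws, 0 ≤ R ws) (hR1 : ∀ ws, R ws ≤ 1) {m n : ℕ}
    (h : m ≤ n) (ws d) : Δ.popval σ π T R m ws d ≤ Δ.popval σ π T R n ws d := by
  induction n with
  | zero => rw [Nat.le_zero.mp h]
  | succ n ih =>
    rcases Nat.lt_or_ge m (n+1) with h' | h'
    · exact (ih (Nat.lt_succ_iff.mp h')).trans (popval_mono_n σ π T R hR0 hR1 n ws d)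
    · rw [Nat.le_antisymm h h']

lemma choice_lift_eq2 (σ : Δ.Strat Δ.isBox) (π π' : Δ.Strat Δ.isDiamond)
    (γ : List Γ) (ws : List (List Γ)) (X : Γ) (β α : List Γ)
    (hπ : π.f (liftH γ ws) ((X :: β) ++ γ) α = π'.f ws (X :: β) α) :
    Δ.choice (σ.proj γ) π' ws (X :: β) α
      = Δ.choice σ π (liftH γ ws) ((X :: β) ++ γ) α := by
  rw [List.cons_append, choice_cons, choice_cons]
  split_ifs with h1 h2
  · rfl
  · rw [← List.cons_append, hπ]
  · rfl

lemma stepP_lift_eq2 (σ : Δ.Strat Δ.isBox) (π π' : Δ.Strat Δ.isDiamond)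
    (γ : List Γ) (ws : List (List Γ)) (X : Γ) (β c' : List Γ)
    (hπ : ∀ α, π.f (liftH γ ws) ((X :: β) ++ γ) α = π'.f ws (X :: β) α) :
    Δ.stepP (σ.proj γ) π' ws (X :: β) c'
      = Δ.stepP σ π (liftH γ ws) ((X :: β) ++ γ) (c' ++ γ) := by
  rw [List.cons_append, stepP_cons, stepP_cons]
  refine tsum_congr fun α => ?_
  have hiff : α ++ β = c' ∧ Δ.rule X α ↔ α ++ (β ++ γ) = c' ++ γ ∧ Δ.rule X α := by
    constructor
    · rintro ⟨h, hr⟩; exact ⟨by rw [← List.append_assoc, h], hr⟩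
    · rintro ⟨h, hr⟩
      rw [← List.append_assoc] at h
      exact ⟨List.append_left_injective γ h, hr⟩
  split_ifs with h1 h2 h2
  · have := choice_lift_eq2 σ π π' γ ws X β α (hπ α)
    rw [List.cons_append] at this
    exact this
  · exact absurd (hiff.mp h1) h2
  · exact absurd (hiff.mpr h2) h1
  · rfl

/-- Claim C: the value of the lifted game is bounded above by the head-game
value with reward `R` at the popping time, provided `R` dominates the
residual values. -/
lemma reachN_lift_le_popval (σ : Δ.Strat Δ.isBox) (π π' : Δ.Strat Δ.isDiamond)
    (ΓT : Set Γ) (T : Set (List Γ)) (γ : List Γ) (R : List (List Γ) → ℝ)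
    (hT : ∀ (X : Γ) (β : List Γ), X :: β ∈ T ↔ X ∈ ΓT)
    (hTnil : ([] : List Γ) ∉ T)
    (hπ : ∀ ws (d : List Γ) α, (∀ u ∈ ws, u ≠ ([] : List Γ)) → d ≠ [] →
      π.f (liftH γ ws) (d ++ γ) α = π'.f ws d α)
    (hR : ∀ n ws, (∀ u ∈ ws, u ≠ ([] : List Γ)) →
      Δ.reachN σ π T n (liftH γ ws) γ ≤ R ws)
    (hR0 : ∀ ws, 0 ≤ R ws) (hR1 : ∀ ws, R ws ≤ 1) :
    ∀ n ws d, (∀ u ∈ ws, u ≠ ([] : List Γ)) →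
      Δ.reachN σ π T n (liftH γ ws) (d ++ γ) ≤ Δ.popval (σ.proj γ) π' T R n ws d := by
  intro n
  induction n with
  | zero =>
    intro ws d hws
    match d with
    | [] =>
      rw [popval_nil _ _ _ _ hTnil, List.nil_append]
      exact hR 0 ws hws
    | X :: β =>
      by_cases hmem : X ∈ ΓT
      · rw [popval_of_mem _ _ _ _ _ _ ((hT X β).mpr hmem)]
        exact reachN_le_one _ _ _ _ _ _
      · rw [reachN_zero, if_neg, popval_zero, if_neg, if_neg]
        · simp
        · exact fun h => hmem ((hT X β).mp h)
        · rw [List.cons_append]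
          exact fun h => hmem ((hT X (β ++ γ)).mp h)
  | succ n ih =>
    intro ws d hws
    match d with
    | [] =>
      rw [popval_nil _ _ _ _ hTnil, List.nil_append]
      exact hR (n+1) ws hws
    | X :: β =>
      by_cases hmem : X ∈ ΓT
      · rw [popval_of_mem _ _ _ _ _ _ ((hT X β).mpr hmem)]
        exact reachN_le_one _ _ _ _ _ _
      · have hmem1 : (X :: β) ∉ T := fun h => hmem ((hT X β).mp h)
        have hmem2 : (X :: β) ++ γ ∉ T := by
          rw [List.cons_append]
          exact fun h => hmem ((hT X (β ++ γ)).mp h)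
        rw [reachN_succ, if_neg hmem2, popval_succ, if_neg hmem1, if_neg (by simp)]
        have hinj : Function.Injective (fun c' : List Γ => c' ++ γ) :=
          List.append_left_injective γ
        have hws' : ∀ u ∈ ws ++ [X :: β], u ≠ ([] : List Γ) := by
          intro u hu
          rcases List.mem_append.mp hu with h | h
          · exact hws u h
          · simp only [List.mem_singleton] at h; subst h; simp
        have hsupp : Function.support (fun c'' =>
            Δ.stepP σ π (liftH γ ws) ((X :: β) ++ γ) c''
              * Δ.reachN σ π T n (liftH γ ws ++ [(X :: β) ++ γ]) c'')
            ⊆ Set.range (fun c' : List Γ => c' ++ γ) := by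
          intro c'' hc''
          simp only [Function.mem_support] at hc''
          have hst : Δ.stepP σ π (liftH γ ws) ((X :: β) ++ γ) c'' ≠ 0 :=
            fun h => hc'' (by rw [h, zero_mul])
          rw [List.cons_append] at hst
          obtain ⟨α, hα, -⟩ := stepP_ne_zero σ π (liftH γ ws) hst
          exact ⟨α ++ β, by rw [← hα]; exact List.append_assoc α β γ⟩
        rw [← hinj.tsum_eq hsupp]
        refine Summable.tsum_le_tsum (fun d' => ?_) ?_
          (popval_mul_summable _ _ _ _ hR0 hR1 n ws _ _)
        · show Δ.stepP σ π (liftH γ ws) ((X :: β) ++ γ) (d' ++ γ) * _ ≤ _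
          rw [← stepP_lift_eq2 σ π π' γ ws X β d'
            (fun α => hπ ws (X :: β) α hws (by simp))]
          refine mul_le_mul_of_nonneg_left ?_ (stepP_nonneg _ _ _ _ _)
          rw [← liftH_append]
          match d' with
          | [] =>
            rw [popval_nil _ _ _ _ hTnil]
            have := hR n (ws ++ [X :: β]) hws'
            simpa using this
          | Y :: β' => exact ih (ws ++ [X :: β]) (Y :: β') hws'
        · exact Summable.comp_injective
            (reachN_mul_summable σ π T n (liftH γ ws) _ ((X :: β) ++ γ)) hinj

section compEval
variable {own : Γ → Prop} (σX : Δ.Strat own) (Φ : List (List Γ) → Δ.Strat own)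
  (γ : List Γ)

lemma comp_eval_phase1 (ws : List (List Γ)) (d : List Γ) (α : List Γ)
    (hws : ∀ u ∈ ws, u ≠ ([] : List Γ)) (hd : d ≠ []) :
    (Strat.comp σX Φ γ).f (liftH γ ws) (d ++ γ) α = σX.f ws d α := by
  show (if _ then _ else _) = _
  rw [if_pos ⟨⟨d, rfl⟩, append_ne_of_ne_nil γ hd, takeWhile_liftH γ hws⟩,
    map_strip_liftH, strip_append]

lemma comp_eval_pop (w : List (List Γ)) (hw : ∀ u ∈ w, PhP γ u = true)
    (c : List Γ) (hc : ¬(γ <:+ c ∧ c ≠ γ)) (α : List Γ) :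
    (Strat.comp σX Φ γ).f w c α = (Φ w).f [] c α := by
  show (if _ then _ else _) = _
  rw [if_neg (by tauto), takeWhile_all hw, List.drop_length]

lemma comp_eval_phase2 (w : List (List Γ)) (hw : ∀ u ∈ w, PhP γ u = true)
    (u : List (List Γ)) (c α : List Γ) :
    (Strat.comp σX Φ γ).f (w ++ γ :: u) c α = (Φ w).f (γ :: u) c α := by
  show (if _ then _ else _) = _
  have ht := takeWhile_break hw (PhP_self γ) u
  rw [if_neg ?_, ht, List.drop_left]
  rintro ⟨-, -, h3⟩
  rw [ht] at h3
  have := congrArg List.length h3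
  simp only [List.length_append, List.length_cons] at this
  omega

end compEval

/-- Residual-value identity for a composed Box strategy after popping. -/
lemma val_comp_res_box (σX : Δ.Strat Δ.isBox) (Φ : List (List Γ) → Δ.Strat Δ.isBox)
    (γ : List Γ) (π : Δ.Strat Δ.isDiamond) (T : Set (List Γ)) (ws : List (List Γ))
    (hws : ∀ u ∈ ws, u ≠ ([] : List Γ)) :
    Δ.val (Φ (liftH γ ws)) (π.res (liftH γ ws)) T [] γ
      = Δ.val (Strat.comp σX Φ γ) π T (liftH γ ws) γ := by
  have hwP := liftH_allP γ hws
  have key : ∀ n (u : List (List Γ)) (c : List Γ),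
      ((u = [] ∧ c = γ) ∨ ∃ u', u = γ :: u') →
      Δ.reachN (Φ (liftH γ ws)) (π.res (liftH γ ws)) T n u c
        = Δ.reachN (Strat.comp σX Φ γ) π T n (liftH γ ws ++ u) c := by
    refine reachN_congr (Strat.comp σX Φ γ) π T (Φ (liftH γ ws)) (π.res (liftH γ ws))
      (liftH γ ws) _ ?_ ?_ ?_
    · rintro u (⟨rfl, rfl⟩ | ⟨u', rfl⟩)
      · exact Or.inr ⟨[], rfl⟩
      · exact Or.inr ⟨u' ++ [[]], List.cons_append⟩
    · rintro u X β α (⟨rfl, rfl⟩ | ⟨u', rfl⟩) _ _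
      · exact Or.inr ⟨[], rfl⟩
      · exact Or.inr ⟨u' ++ [X :: β], List.cons_append⟩
    · rintro u c α hI hc
      match c with
      | [] => rw [choice_nil, choice_nil]
      | Y :: β =>
        rw [choice_cons, choice_cons]
        have hbox : (Φ (liftH γ ws)).f u (Y :: β) α
            = (Strat.comp σX Φ γ).f (liftH γ ws ++ u) (Y :: β) α := by
          rcases hI with ⟨hu, hcγ⟩ | ⟨u', hu⟩
          · rw [hu, List.append_nil, comp_eval_pop σX Φ γ _ hwP _ (fun h => h.2 hcγ)]
          · rw [hu, comp_eval_phase2 σX Φ γ _ hwP]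
        have hdia : (π.res (liftH γ ws)).f u (Y :: β) α
            = π.f (liftH γ ws ++ u) (Y :: β) α := rfl
        rw [hbox, hdia]
  unfold val
  refine iSup_congr fun n => ?_
  have := key n [] γ (Or.inl ⟨rfl, rfl⟩)
  rwa [List.append_nil] at this

/-- Residual-value identity for a composed Diamond strategy after popping. -/
lemma val_comp_res_dia (σ : Δ.Strat Δ.isBox) (π1 : Δ.Strat Δ.isDiamond)
    (Φ : List (List Γ) → Δ.Strat Δ.isDiamond)
    (γ : List Γ) (T : Set (List Γ)) (ws : List (List Γ))
    (hws : ∀ u ∈ ws, u ≠ ([] : List Γ)) :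
    Δ.val (σ.res (liftH γ ws)) (Φ (liftH γ ws)) T [] γ
      = Δ.val σ (Strat.comp π1 Φ γ) T (liftH γ ws) γ := by
  have hwP := liftH_allP γ hws
  have key : ∀ n (u : List (List Γ)) (c : List Γ),
      ((u = [] ∧ c = γ) ∨ ∃ u', u = γ :: u') →
      Δ.reachN (σ.res (liftH γ ws)) (Φ (liftH γ ws)) T n u c
        = Δ.reachN σ (Strat.comp π1 Φ γ) T n (liftH γ ws ++ u) c := by
    refine reachN_congr σ (Strat.comp π1 Φ γ) T (σ.res (liftH γ ws)) (Φ (liftH γ ws))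
      (liftH γ ws) _ ?_ ?_ ?_
    · rintro u (⟨rfl, rfl⟩ | ⟨u', rfl⟩)
      · exact Or.inr ⟨[], rfl⟩
      · exact Or.inr ⟨u' ++ [[]], List.cons_append⟩
    · rintro u X β α (⟨rfl, rfl⟩ | ⟨u', rfl⟩) _ _
      · exact Or.inr ⟨[], rfl⟩
      · exact Or.inr ⟨u' ++ [X :: β], List.cons_append⟩
    · rintro u c α hI hc
      match c with
      | [] => rw [choice_nil, choice_nil]
      | Y :: β =>
        rw [choice_cons, choice_cons]
        have hdia : (Φ (liftH γ ws)).f u (Y :: β) α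
            = (Strat.comp π1 Φ γ).f (liftH γ ws ++ u) (Y :: β) α := by
          rcases hI with ⟨hu, hcγ⟩ | ⟨u', hu⟩
          · rw [hu, List.append_nil, comp_eval_pop π1 Φ γ _ hwP _ (fun h => h.2 hcγ)]
          · rw [hu, comp_eval_phase2 π1 Φ γ _ hwP]
        have hbox : (σ.res (liftH γ ws)).f u (Y :: β) α
            = σ.f (liftH γ ws ++ u) (Y :: β) α := rfl
        rw [hbox, hdia]
  unfold val
  refine iSup_congr fun n => ?_
  have := key n [] γ (Or.inl ⟨rfl, rfl⟩)
  rwa [List.append_nil] at this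

/-- The pop contribution: value collected only through popping rewards. -/
noncomputable def popE (Δ : BPA Γ) (σ : Δ.Strat Δ.isBox) (π : Δ.Strat Δ.isDiamond)
    (T : Set (List Γ)) (R : List (List Γ) → ℝ) :
    ℕ → List (List Γ) → List Γ → ℝ
  | 0, ws, d => if d ∈ T then 0 else if d = [] then R ws else 0
  | n+1, ws, d => if d ∈ T then 0 else if d = [] then R ws else
      ∑' d', Δ.stepP σ π ws d d' * popE Δ σ π T R n (ws ++ [d]) d'

lemma popE_zero (ws d) : Δ.popE σ π T R 0 ws d
    = if d ∈ T then 0 else if d = [] then R ws else 0 := rfl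

lemma popE_succ (n ws d) : Δ.popE σ π T R (n+1) ws d
    = if d ∈ T then 0 else if d = [] then R ws else
      ∑' d', Δ.stepP σ π ws d d' * Δ.popE σ π T R n (ws ++ [d]) d' := rfl

lemma popE_nil (hT : ([] : List Γ) ∉ T) (n ws) : Δ.popE σ π T R n ws [] = R ws := by
  cases n
  · rw [popE_zero, if_neg hT, if_pos rfl]
  · rw [popE_succ, if_neg hT, if_pos rfl]

lemma popE_of_mem {d} (n ws) (hd : d ∈ T) : Δ.popE σ π T R n ws d = 0 := by
  cases n
  · rw [popE_zero, if_pos hd]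
  · rw [popE_succ, if_pos hd]

lemma popE_nonneg (hR : ∀ ws, 0 ≤ R ws) (n) : ∀ ws d, 0 ≤ Δ.popE σ π T R n ws d := by
  induction n with
  | zero =>
    intro ws d
    rw [popE_zero]
    split_ifs
    · rfl
    · exact hR ws
    · rfl
  | succ n ih =>
    intro ws d
    rw [popE_succ]
    split_ifs
    · rfl
    · exact hR ws
    · exact tsum_nonneg fun d' => mul_nonneg (stepP_nonneg _ _ _ _ _) (ih _ d')

lemma popE_le_one (hR0 : ∀ ws, 0 ≤ R ws) (hR : ∀ ws, R ws ≤ 1) (n) :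
    ∀ ws d, Δ.popE σ π T R n ws d ≤ 1 := by
  induction n with
  | zero =>
    intro ws d
    rw [popE_zero]
    split_ifs
    · norm_num
    · exact hR ws
    · norm_num
  | succ n ih =>
    intro ws d
    rw [popE_succ]
    split_ifs
    · norm_num
    · exact hR ws
    · calc ∑' d', Δ.stepP σ π ws d d' * Δ.popE σ π T R n (ws ++ [d]) d'
          ≤ ∑' d', Δ.stepP σ π ws d d' := by
            refine Summable.tsum_le_tsum (fun d' => mul_le_of_le_one_right
              (stepP_nonneg _ _ _ _ _) (ih _ d')) ?_ (stepP_summable σ π ws d)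
            exact Summable.of_nonneg_of_le
              (fun d' => mul_nonneg (stepP_nonneg _ _ _ _ _)
                (popE_nonneg σ π T R hR0 n _ d'))
              (fun d' => mul_le_of_le_one_right (stepP_nonneg _ _ _ _ _) (ih _ d'))
              (stepP_summable σ π ws d)
        _ = 1 := stepP_tsum σ π ws d

lemma popE_mul_summable (hR0 : ∀ ws, 0 ≤ R ws) (hR : ∀ ws, R ws ≤ 1) (n ws ws' d) :
    Summable (fun d' => Δ.stepP σ π ws d d' * Δ.popE σ π T R n ws' d') :=
  Summable.of_nonneg_of_le
    (fun d' => mul_nonneg (stepP_nonneg _ _ _ _ _) (popE_nonneg σ π T R hR0 n _ d'))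
    (fun d' => mul_le_of_le_one_right (stepP_nonneg _ _ _ _ _)
      (popE_le_one σ π T R hR0 hR n _ d'))
    (stepP_summable σ π ws d)

lemma popE_monoR {R' : List (List Γ) → ℝ}
    (hR0 : ∀ ws, 0 ≤ R ws) (hR1 : ∀ ws, R' ws ≤ 1)
    (hRR : ∀ ws, R ws ≤ R' ws) (n) :
    ∀ ws d, Δ.popE σ π T R n ws d ≤ Δ.popE σ π T R' n ws d := by
  induction n with
  | zero =>
    intro ws d
    rw [popE_zero, popE_zero]
    split_ifs
    · exact le_refl 0
    · exact hRR ws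
    · exact le_refl 0
  | succ n ih =>
    intro ws d
    rw [popE_succ, popE_succ]
    split_ifs
    · exact le_refl 0
    · exact hRR ws
    · refine Summable.tsum_le_tsum (fun d' => mul_le_mul_of_nonneg_left (ih _ d')
        (stepP_nonneg _ _ _ _ _)) ?_ ?_
      · exact popE_mul_summable σ π T R hR0
          (fun ws => (hRR ws).trans (hR1 ws)) n ws _ d
      · exact popE_mul_summable σ π T R'
          (fun ws => (hR0 ws).trans (hRR ws)) hR1 n ws _ d

/-- `popval` splits as the pure reach value plus the pop contribution. -/
lemma popval_split (hR0 : ∀ ws, 0 ≤ R ws) (hR1 : ∀ ws, R ws ≤ 1) (n) :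
    ∀ ws d, Δ.popval σ π T R n ws d
      = Δ.popval σ π T (fun _ => 0) n ws d + Δ.popE σ π T R n ws d := by
  induction n with
  | zero =>
    intro ws d
    rw [popval_zero, popval_zero, popE_zero]
    split_ifs
    · norm_num
    · norm_num
    · norm_num
  | succ n ih =>
    intro ws d
    rw [popval_succ, popval_succ, popE_succ]
    split_ifs
    · norm_num
    · norm_num
    · rw [← Summable.tsum_add
        (popval_mul_summable σ π T (fun _ => 0) (fun _ => le_refl 0)
          (fun _ => zero_le_one) n ws _ d)
        (popE_mul_summable σ π T R hR0 hR1 n ws _ d)]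
      exact tsum_congr fun d' => by rw [ih, mul_add]

lemma popval_zeroR (hT : ([] : List Γ) ∉ T) (n) :
    ∀ ws d, Δ.popval σ π T (fun _ => 0) n ws d = Δ.reachN σ π T n ws d := by
  induction n with
  | zero =>
    intro ws d
    rw [popval_zero, reachN_zero]
    split_ifs with h1 h2
    · rfl
    · rfl
    · rfl
  | succ n ih =>
    intro ws d
    rw [popval_succ, reachN_succ]
    by_cases h1 : d ∈ T
    · rw [if_pos h1, if_pos h1]
    · rw [if_neg h1, if_neg h1]
      by_cases h2 : d = []
      · subst h2
        rw [if_pos rfl]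
        have : ∀ d' : List Γ, Δ.stepP σ π ws [] d' * Δ.reachN σ π T n (ws ++ [[]]) d'
            = if d' = [] then Δ.reachN σ π T n (ws ++ [[]]) [] else 0 := by
          intro d'
          rw [stepP_nil]
          split_ifs with h
          · subst h; rw [one_mul]
          · rw [zero_mul]
        rw [tsum_congr this, tsum_ite_eq, reachN_nil σ π T hT]
      · rw [if_neg h2]
        exact tsum_congr fun d' => by rw [ih]

/-- If a pop is reachable with positive probability, then the reward-`R`
pop value stays a fixed positive amount below the reward-`1` pop value. -/
lemma popE_strict (hTnil : ([] : List Γ) ∉ T)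
    (hR0 : ∀ ws, 0 ≤ R ws) (hR1 : ∀ ws, R ws ≤ 1)
    (hRlt : ∀ ws, (∀ u ∈ ws, u ≠ ([] : List Γ)) → R ws < 1) :
    ∀ n ws d, (∀ u ∈ ws, u ≠ ([] : List Γ)) →
      0 < Δ.popE σ π T (fun _ => 1) n ws d →
      ∃ q > 0, ∀ m, Δ.popE σ π T R (n+m) ws d
        ≤ Δ.popE σ π T (fun _ => 1) (n+m) ws d - q := by
  intro n
  induction n with
  | zero =>
    intro ws d hws h
    rw [popE_zero] at h
    by_cases h1 : d ∈ T
    · rw [if_pos h1] at h; exact absurd h (lt_irrefl 0)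
    · by_cases h2 : d = []
      · subst h2
        refine ⟨1 - R ws, by linarith [hRlt ws hws], fun m => ?_⟩
        rw [popE_nil σ π T R hTnil, popE_nil σ π T _ hTnil]
        linarith
      · rw [if_neg h1, if_neg h2] at h; exact absurd h (lt_irrefl 0)
  | succ n ih =>
    intro ws d hws h
    by_cases h1 : d ∈ T
    · rw [popE_of_mem σ π T _ _ _ h1] at h; exact absurd h (lt_irrefl 0)
    · by_cases h2 : d = []
      · subst h2
        refine ⟨1 - R ws, by linarith [hRlt ws hws], fun m => ?_⟩
        rw [popE_nil σ π T R hTnil, popE_nil σ π T _ hTnil]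
        linarith
      · rw [popE_succ, if_neg h1, if_neg h2] at h
        have hex : ∃ d₀, 0 < Δ.stepP σ π ws d d₀
            * Δ.popE σ π T (fun _ => 1) n (ws ++ [d]) d₀ := by
          by_contra hno
          push_neg at hno
          have : (∑' d', Δ.stepP σ π ws d d'
              * Δ.popE σ π T (fun _ => 1) n (ws ++ [d]) d') ≤ ∑' _ : List Γ, (0:ℝ) :=
            Summable.tsum_le_tsum hno
              (popE_mul_summable σ π T _ (fun _ => zero_le_one)
                (fun _ => le_refl 1) n ws _ d) summable_zero
          rw [tsum_zero] at this
          linarith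
        obtain ⟨d₀, hterm⟩ := hex
        have hs0 := stepP_nonneg σ π ws d d₀
        have hp0 := popE_nonneg σ π T _ (fun _ => zero_le_one) n (ws ++ [d]) d₀
        have hst : 0 < Δ.stepP σ π ws d d₀ := by
          rcases lt_or_eq_of_le hs0 with h' | h'
          · exact h'
          · rw [← h', zero_mul] at hterm; exact absurd hterm (lt_irrefl 0)
        have hpe : 0 < Δ.popE σ π T (fun _ => 1) n (ws ++ [d]) d₀ := by
          rcases lt_or_eq_of_le hp0 with h' | h'
          · exact h'
          · rw [← h', mul_zero] at hterm; exact absurd hterm (lt_irrefl 0)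
        have hws' : ∀ u ∈ ws ++ [d], u ≠ ([] : List Γ) := by
          intro u hu
          rcases List.mem_append.mp hu with h' | h'
          · exact hws u h'
          · simp only [List.mem_singleton] at h'; subst h'; exact h2
        obtain ⟨q, hq, hm⟩ := ih (ws ++ [d]) d₀ hws' hpe
        refine ⟨Δ.stepP σ π ws d d₀ * q, mul_pos hst hq, fun m => ?_⟩
        have harith : n + 1 + m = (n + m) + 1 := by omega
        rw [harith, popE_succ, popE_succ, if_neg h1, if_neg h1, if_neg h2, if_neg h2]
        have hsum1 := popE_mul_summable σ π T R hR0 hR1 (n+m) ws (ws ++ [d]) d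
        have hsum2 := popE_mul_summable σ π T (fun _ => 1) (fun _ => zero_le_one)
          (fun _ => le_refl 1) (n+m) ws (ws ++ [d]) d
        have hsumInd : Summable (fun d' : List Γ =>
            if d' = d₀ then Δ.stepP σ π ws d d₀ * q else 0) := by
          apply summable_of_ne_finset_zero (s := {d₀})
          intro d' hd'
          simp only [Finset.mem_singleton] at hd'
          rw [if_neg hd']
        calc ∑' d', Δ.stepP σ π ws d d' * Δ.popE σ π T R (n+m) (ws ++ [d]) d'
            ≤ ∑' d', (Δ.stepP σ π ws d d' * Δ.popE σ π T (fun _ => 1) (n+m) (ws ++ [d]) d'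
                - if d' = d₀ then Δ.stepP σ π ws d d₀ * q else 0) := by
              refine Summable.tsum_le_tsum (fun d' => ?_) hsum1 (hsum2.sub hsumInd)
              by_cases hd' : d' = d₀
              · subst hd'
                rw [if_pos rfl]
                have := mul_le_mul_of_nonneg_left (hm m) hs0
                rw [mul_sub] at this
                linarith
              · rw [if_neg hd', sub_zero]
                exact mul_le_mul_of_nonneg_left
                  (popE_monoR σ π T R (R' := fun _ => 1) hR0 (fun _ => le_refl 1)
                    hR1 (n+m) _ d') (stepP_nonneg σ π ws d d')
          _ = (∑' d', Δ.stepP σ π ws d d' * Δ.popE σ π T (fun _ => 1) (n+m) (ws ++ [d]) d')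
                - Δ.stepP σ π ws d d₀ * q := by
              rw [Summable.tsum_sub hsum2 hsumInd, tsum_ite_eq]

lemma popval_bound_lt_one (hTnil : ([] : List Γ) ∉ T)
    (hR0 : ∀ ws, 0 ≤ R ws) (hR1 : ∀ ws, R ws ≤ 1)
    (hRlt : ∀ ws, (∀ u ∈ ws, u ≠ ([] : List Γ)) → R ws < 1) (d₀ : List Γ)
    (ha : Δ.val σ π T [] d₀ < 1) :
    ∃ b < 1, ∀ n, Δ.popval σ π T R n [] d₀ ≤ b := by
  by_cases hE : ∃ n₀, 0 < Δ.popE σ π T (fun _ => 1) n₀ [] d₀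
  · obtain ⟨n₀, hpos⟩ := hE
    obtain ⟨q, hq, hm⟩ := popE_strict σ π T R hTnil hR0 hR1 hRlt n₀ [] d₀
      (by intro u hu; simp at hu) hpos
    refine ⟨1 - q, by linarith, fun n => ?_⟩
    calc Δ.popval σ π T R n [] d₀
        ≤ Δ.popval σ π T R (n₀ + n) [] d₀ :=
          popval_mono_le σ π T R hR0 hR1 (Nat.le_add_left n n₀) [] d₀
      _ = Δ.popval σ π T (fun _ => 0) (n₀ + n) [] d₀
            + Δ.popE σ π T R (n₀ + n) [] d₀ :=
          popval_split σ π T R hR0 hR1 (n₀ + n) [] d₀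
      _ ≤ Δ.popval σ π T (fun _ => 0) (n₀ + n) [] d₀
            + (Δ.popE σ π T (fun _ => 1) (n₀ + n) [] d₀ - q) := by
          have := hm n
          linarith
      _ = Δ.popval σ π T (fun _ => 1) (n₀ + n) [] d₀ - q := by
          rw [popval_split σ π T (fun _ => 1) (fun _ => zero_le_one)
            (fun _ => le_refl 1) (n₀ + n) [] d₀]
          ring
      _ ≤ 1 - q := by
          have := popval_le_one σ π T (fun _ => 1) (fun _ => zero_le_one)
            (fun _ => le_refl 1) (n₀ + n) [] d₀
          linarith
  · push_neg at hE
    refine ⟨Δ.val σ π T [] d₀, ha, fun n => ?_⟩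
    calc Δ.popval σ π T R n [] d₀
        = Δ.popval σ π T (fun _ => 0) n [] d₀ + Δ.popE σ π T R n [] d₀ :=
          popval_split σ π T R hR0 hR1 n [] d₀
      _ ≤ Δ.reachN σ π T n [] d₀ + 0 := by
          rw [popval_zeroR σ π T hTnil n [] d₀]
          have h1 := popE_monoR σ π T R (R' := fun _ => 1) hR0
            (fun _ => le_refl 1) hR1 n [] d₀
          have h2 := hE n
          linarith
      _ ≤ Δ.val σ π T [] d₀ := by rw [add_zero]; exact reachN_le_val σ π T n [] d₀

section mainLemmas

variable {ΓT : Set Γ}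

lemma lemD (hT : ∀ (X : Γ) (β : List Γ), X :: β ∈ T ↔ X ∈ ΓT)
    (hTnil : ([] : List Γ) ∉ T) (X : Γ) (γ : List Γ)
    (hX : ∃ σX : Δ.Strat Δ.isBox, ∀ π' : Δ.Strat Δ.isDiamond,
      Δ.val σX π' T [] [X] = 1) :
    ∃ σ : Δ.Strat Δ.isBox, ∀ π : Δ.Strat Δ.isDiamond,
      Δ.val σ π T [] (X :: γ) = 1 := by
  obtain ⟨σX, hσX⟩ := hX
  refine ⟨Strat.comp σX (fun _ => Strat.dflt Δ Δ.isBox) γ, fun π => ?_⟩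
  set σ := Strat.comp σX (fun _ => Strat.dflt Δ Δ.isBox) γ with hσdef
  have hle := reachN_head_le_val σX σ π ΓT T T γ hT hT
    (fun ws d α hws hd => comp_eval_phase1 σX _ γ ws d α hws hd)
    (fun n ws hws => by
      rw [reachN_nil _ _ _ hTnil]
      exact val_nonneg σ π T _ _)
  have h1 : (1:ℝ) ≤ Δ.val σ π T [] (X :: γ) := by
    rw [← hσX (Strat.proj π γ)]
    refine ciSup_le fun n => ?_
    exact hle n [] [X] (by intro u hu; simp at hu)
  exact le_antisymm (val_le_one σ π T [] (X :: γ)) h1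

lemma cons_mem_union_iff (hT : ∀ (X : Γ) (β : List Γ), X :: β ∈ T ↔ X ∈ ΓT)
    (X : Γ) (β : List Γ) : X :: β ∈ T ∪ {([] : List Γ)} ↔ X ∈ ΓT := by
  rw [Set.mem_union]
  constructor
  · rintro (h | h)
    · exact (hT X β).mp h
    · simp at h
  · intro h; exact Or.inl ((hT X β).mpr h)

lemma lemB (hT : ∀ (X : Γ) (β : List Γ), X :: β ∈ T ↔ X ∈ ΓT)
    (hTnil : ([] : List Γ) ∉ T) (X : Γ) (γ : List Γ)
    (hX : ∃ σX : Δ.Strat Δ.isBox, ∀ π' : Δ.Strat Δ.isDiamond,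
      Δ.val σX π' (T ∪ {([] : List Γ)}) [] [X] = 1)
    (hγ : ∃ σγ : Δ.Strat Δ.isBox, ∀ π' : Δ.Strat Δ.isDiamond,
      Δ.val σγ π' T [] γ = 1) :
    ∃ σ : Δ.Strat Δ.isBox, ∀ π : Δ.Strat Δ.isDiamond,
      Δ.val σ π T [] (X :: γ) = 1 := by
  obtain ⟨σX, hσX⟩ := hX
  obtain ⟨σγ, hσγ⟩ := hγ
  refine ⟨Strat.comp σX (fun _ => σγ) γ, fun π => ?_⟩
  set σ := Strat.comp σX (fun _ => σγ) γ with hσdef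
  have hle := reachN_head_le_val σX σ π ΓT T (T ∪ {([] : List Γ)}) γ hT
    (cons_mem_union_iff T hT)
    (fun ws d α hws hd => comp_eval_phase1 σX _ γ ws d α hws hd)
    (fun n ws hws => by
      rw [reachN_of_mem _ _ _ _ _ (show ([] : List Γ) ∈ T ∪ {([] : List Γ)} by simp)]
      rw [← val_comp_res_box σX (fun _ => σγ) γ π T ws hws]
      rw [hσγ (Strat.res π (liftH γ ws))])
  have h1 : (1:ℝ) ≤ Δ.val σ π T [] (X :: γ) := by
    rw [← hσX (Strat.proj π γ)]
    refine ciSup_le fun n => ?_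
    exact hle n [] [X] (by intro u hu; simp at hu)
  exact le_antisymm (val_le_one σ π T [] (X :: γ)) h1

lemma lemHeadB (hT : ∀ (X : Γ) (β : List Γ), X :: β ∈ T ↔ X ∈ ΓT)
    (hTnil : ([] : List Γ) ∉ T) (X : Γ) (γ : List Γ)
    (h : ∃ σ : Δ.Strat Δ.isBox, ∀ π : Δ.Strat Δ.isDiamond,
      Δ.val σ π T [] (X :: γ) = 1) :
    ∃ σ' : Δ.Strat Δ.isBox, ∀ π' : Δ.Strat Δ.isDiamond,
      Δ.val σ' π' (T ∪ {([] : List Γ)}) [] [X] = 1 := by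
  obtain ⟨σ, hσ⟩ := h
  refine ⟨σ.proj γ, fun π' => ?_⟩
  set π := Strat.comp π' (fun _ => π') γ with hπdef
  have hle := reachN_lift_le_popval σ π π' ΓT T γ (fun _ => 1) hT hTnil
    (fun ws d α hws hd => comp_eval_phase1 π' _ γ ws d α hws hd)
    (fun n ws hws => reachN_le_one σ π T n _ γ)
    (fun _ => zero_le_one) (fun _ => le_refl 1)
  have h1 : (1:ℝ) ≤ Δ.val (σ.proj γ) π' (T ∪ {([] : List Γ)}) [] [X] := by
    rw [← hσ π]
    refine ciSup_le fun n => ?_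
    have := hle n [] [X] (by intro u hu; simp at hu)
    rw [popval_one _ _ _ hTnil n [] [X]] at this
    exact this.trans (reachN_le_val _ _ _ n [] [X])
  exact le_antisymm (val_le_one _ _ _ [] [X]) h1

lemma lemTail (hT : ∀ (X : Γ) (β : List Γ), X :: β ∈ T ↔ X ∈ ΓT)
    (hTnil : ([] : List Γ) ∉ T) (X : Γ) (γ : List Γ)
    (h : ∃ σ : Δ.Strat Δ.isBox, ∀ π : Δ.Strat Δ.isDiamond,
      Δ.val σ π T [] (X :: γ) = 1)
    (hXD : ¬ ∃ σ'' : Δ.Strat Δ.isBox, ∀ π'' : Δ.Strat Δ.isDiamond,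
      Δ.val σ'' π'' T [] [X] = 1) :
    ∃ σγ : Δ.Strat Δ.isBox, ∀ πγ : Δ.Strat Δ.isDiamond,
      Δ.val σγ πγ T [] γ = 1 := by
  by_contra hγ
  push_neg at hγ hXD
  obtain ⟨σ, hσ⟩ := h
  obtain ⟨π'1, hπ'1⟩ := hXD (σ.proj γ)
  have ha : Δ.val (σ.proj γ) π'1 T [] [X] < 1 :=
    lt_of_le_of_ne (val_le_one _ _ _ [] [X]) hπ'1
  classical
  set Φ : List (List Γ) → Δ.Strat Δ.isDiamond :=
    fun h => Classical.choose (hγ (σ.res h)) with hΦdef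
  have hΦspec : ∀ h, Δ.val (σ.res h) (Φ h) T [] γ ≠ 1 :=
    fun h => Classical.choose_spec (hγ (σ.res h))
  set π := Strat.comp π'1 Φ γ with hπdef
  set R : List (List Γ) → ℝ := fun ws => Δ.val σ π T (liftH γ ws) γ with hRdef
  have hRlt : ∀ ws, (∀ u ∈ ws, u ≠ ([] : List Γ)) → R ws < 1 := by
    intro ws hws
    have heq := val_comp_res_dia σ π'1 Φ γ T ws hws
    refine lt_of_le_of_ne (val_le_one _ _ _ _ _) ?_
    rw [hRdef]
    simp only
    rw [← heq]
    exact hΦspec (liftH γ ws)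
  have hle := reachN_lift_le_popval σ π π'1 ΓT T γ R hT hTnil
    (fun ws d α hws hd => comp_eval_phase1 π'1 _ γ ws d α hws hd)
    (fun n ws hws => reachN_le_val σ π T n _ γ)
    (fun _ => val_nonneg σ π T _ γ) (fun _ => val_le_one σ π T _ γ)
  obtain ⟨b, hb1, hb⟩ := popval_bound_lt_one (σ.proj γ) π'1 T R hTnil
    (fun _ => val_nonneg σ π T _ γ) (fun _ => val_le_one σ π T _ γ) hRlt [X] ha
  have h1 : Δ.val σ π T [] (X :: γ) ≤ b := by
    refine ciSup_le fun n => ?_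
    exact (hle n [] [X] (by intro u hu; simp at hu)).trans (hb n)
  rw [hσ π] at h1
  linarith

end mainLemmas

end BPA





namespace BPA
variable {Δ : BPA Γ}

lemma mem_WBoxOne_iff (T : Set (List Γ)) (c : List Γ) :
    c ∈ Δ.WBoxOne T ↔ ∃ σ : Δ.Strat Δ.isBox, ∀ π : Δ.Strat Δ.isDiamond,
      Δ.val σ π T [] c = 1 := Iff.rfl

lemma topLang_cons_iff (ΓT : Set Γ) (X : Γ) (β : List Γ) :
    X :: β ∈ (topLang ΓT : Set (List Γ)) ↔ X ∈ ΓT := by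
  constructor
  · rintro ⟨Y, β', heq, hY⟩
    injection heq with h1 h2
    subst h1; exact hY
  · intro h; exact ⟨X, β, rfl, h⟩

lemma topLang_nil_not (ΓT : Set Γ) : ([] : List Γ) ∉ (topLang ΓT : Set (List Γ)) := by
  rintro ⟨Y, β', heq, -⟩
  cases heq

lemma nil_not_mem_WBoxOne (ΓT : Set Γ) :
    ([] : List Γ) ∉ Δ.WBoxOne (topLang ΓT) := by
  rintro ⟨σ, h⟩
  have := h (Strat.dflt Δ Δ.isDiamond)
  have h0 := val_nil σ (Strat.dflt Δ Δ.isDiamond) (topLang ΓT)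
    (topLang_nil_not ΓT) []
  rw [show Δ.reachP σ (Strat.dflt Δ Δ.isDiamond) (topLang ΓT) []
    = Δ.val σ (Strat.dflt Δ Δ.isDiamond) (topLang ΓT) [] [] from rfl, h0] at this
  norm_num at this

lemma cons_mem_WBoxOne_iff (ΓT : Set Γ) (X : Γ) (γ : List Γ) :
    X :: γ ∈ Δ.WBoxOne (topLang ΓT)
      ↔ ([X] ∈ Δ.WBoxOne (topLang ΓT)
          ∨ ([X] ∈ Δ.WBoxOne (topLang ΓT ∪ {([] : List Γ)})
              ∧ γ ∈ Δ.WBoxOne (topLang ΓT))) := by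
  have hT := topLang_cons_iff ΓT
  have hTnil := topLang_nil_not ΓT
  constructor
  · intro h
    replace h := (mem_WBoxOne_iff _ _).mp h
    by_cases hD : [X] ∈ Δ.WBoxOne (topLang ΓT)
    · exact Or.inl hD
    · refine Or.inr ⟨?_, ?_⟩
      · refine (mem_WBoxOne_iff _ _).mpr ?_
        exact lemHeadB (topLang ΓT) hT hTnil X γ h
      · refine (mem_WBoxOne_iff _ _).mpr ?_
        refine lemTail (topLang ΓT) hT hTnil X γ h ?_
        replace hD := mt (mem_WBoxOne_iff _ _).mpr hD
        exact hD
  · rintro (hD | ⟨hB, hγ⟩)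
    · replace hD := (mem_WBoxOne_iff _ _).mp hD; refine (mem_WBoxOne_iff _ _).mpr ?_
      exact lemD (topLang ΓT) hT hTnil X γ hD
    · replace hB := (mem_WBoxOne_iff _ _).mp hB; replace hγ := (mem_WBoxOne_iff _ _).mp hγ
      refine (mem_WBoxOne_iff _ _).mpr ?_
      exact lemB (topLang ΓT) hT hTnil X γ hB hγ

end BPA

/-- The language `B* D Γ*` described concretely. -/
def goodLang (B D : Set Γ) : Set (List Γ) :=
  {c | ∃ l X r, c = l ++ X :: r ∧ X ∈ D ∧ ∀ y ∈ l, y ∈ B}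

lemma goodLang_nil_not (B D : Set Γ) : ([] : List Γ) ∉ goodLang B D := by
  rintro ⟨l, X, r, heq, -, -⟩
  have := congrArg List.length heq
  simp at this

lemma goodLang_cons (B D : Set Γ) (X : Γ) (γ : List Γ) :
    X :: γ ∈ goodLang B D ↔ X ∈ D ∨ (X ∈ B ∧ γ ∈ goodLang B D) := by
  constructor
  · rintro ⟨l, Y, r, heq, hY, hl⟩
    match l with
    | [] =>
      rw [List.nil_append] at heq
      injection heq with h1 h2
      subst h1
      exact Or.inl hY
    | z :: l' =>
      rw [List.cons_append] at heq
      injection heq with h1 h2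
      subst h1
      refine Or.inr ⟨hl X (by simp), l', Y, r, h2, hY, fun y hy => hl y (by simp [hy])⟩
  · rintro (hD | ⟨hB, l, Y, r, heq, hY, hl⟩)
    · exact ⟨[], X, γ, rfl, hD, by simp⟩
    · refine ⟨X :: l, Y, r, by rw [heq, List.cons_append], hY, ?_⟩
      intro y hy
      rcases List.mem_cons.mp hy with h | h
      · subst h; exact hB
      · exact hl y h

lemma WBoxOne_eq_goodLang (Δ : BPA Γ) (ΓT : Set Γ) (B D : Set Γ)
    (hB : B = {X | [X] ∈ Δ.WBoxOne (topLang ΓT ∪ {([] : List Γ)})})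
    (hD : D = {X | [X] ∈ Δ.WBoxOne (topLang ΓT)}) :
    Δ.WBoxOne (topLang ΓT) = goodLang B D := by
  ext c
  induction c with
  | nil =>
    constructor
    · intro h; exact absurd h (BPA.nil_not_mem_WBoxOne ΓT)
    · intro h; exact absurd h (goodLang_nil_not B D)
  | cons X γ ih =>
    rw [BPA.cons_mem_WBoxOne_iff ΓT X γ, goodLang_cons, ← ih, hB, hD]
    rfl

lemma flatten_map_singleton (l : List Γ) :
    (l.map fun y => [y]).flatten = l := by
  induction l with
  | nil => rfl
  | cons x l ih => simp [ih]

lemma mem_kstar_symLang_iff (B : Set Γ) (l : List Γ) :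
    l ∈ KStar.kstar (symLang B) ↔ ∀ y ∈ l, y ∈ B := by
  rw [Language.mem_kstar]
  constructor
  · rintro ⟨L, rfl, hL⟩ y hy
    rw [List.mem_flatten] at hy
    obtain ⟨p, hp, hyp⟩ := hy
    obtain ⟨Z, hZ, rfl⟩ := hL p hp
    simp only [List.mem_singleton] at hyp
    subst hyp
    exact hZ
  · intro h
    refine ⟨l.map fun y => [y], (flatten_map_singleton l).symm, ?_⟩
    intro p hp
    obtain ⟨y, hy, rfl⟩ := List.mem_map.mp hp
    exact ⟨y, h y hy, rfl⟩

lemma goodLang_eq_lang (B D : Set Γ) :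
    (goodLang B D : Language Γ)
      = KStar.kstar (symLang B) * symLang D * (⊤ : Language Γ) := by
  ext c
  constructor
  · rintro ⟨l, X, r, rfl, hX, hl⟩
    apply Language.mem_mul.mpr
    refine ⟨l ++ [X], ?_, r, trivial, by simp⟩
    rw [Language.mem_mul]
    exact ⟨l, (mem_kstar_symLang_iff B l).mpr hl, [X], ⟨X, hX, rfl⟩, rfl⟩
  · intro h
    replace h := Language.mem_mul.mp h
    obtain ⟨u, hu, v, -, rfl⟩ := h
    rw [Language.mem_mul] at hu
    obtain ⟨s, hs, w, ⟨X, hX, rfl⟩, rfl⟩ := hu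
    exact ⟨s, X, v, by simp, hX, (mem_kstar_symLang_iff B s).mp hs⟩

/-- The 3-state DFA accepting `B* D Γ*`. -/
noncomputable def goodDFA (B D : Set Γ) : DFA Γ (Fin 3) where
  step q x := if q = 1 then 1 else if q = 2 then 2
    else if x ∈ D then 1 else if x ∈ B then 0 else 2
  start := 0
  accept := {1}

lemma goodDFA_eval1 (B D : Set Γ) : ∀ c, (goodDFA B D).evalFrom 1 c = 1 := by
  intro c
  induction c with
  | nil => rfl
  | cons x γ ih =>
    rw [show (goodDFA B D).evalFrom 1 (x :: γ)
      = (goodDFA B D).evalFrom ((goodDFA B D).step 1 x) γ from rfl]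
    rw [show (goodDFA B D).step 1 x = 1 by simp [goodDFA]]
    exact ih

lemma goodDFA_eval2 (B D : Set Γ) : ∀ c, (goodDFA B D).evalFrom 2 c = 2 := by
  intro c
  induction c with
  | nil => rfl
  | cons x γ ih =>
    rw [show (goodDFA B D).evalFrom 2 (x :: γ)
      = (goodDFA B D).evalFrom ((goodDFA B D).step 2 x) γ from rfl]
    rw [show (goodDFA B D).step 2 x = 2 by simp [goodDFA]]
    exact ih

lemma goodDFA_eval0 (B D : Set Γ) :
    ∀ c, (goodDFA B D).evalFrom 0 c = 1 ↔ c ∈ goodLang B D := by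
  intro c
  induction c with
  | nil =>
    constructor
    · intro h
      have h0 : (0 : Fin 3) = 1 := h
      exact absurd h0 (by decide)
    · intro h; exact absurd h (goodLang_nil_not B D)
  | cons x γ ih =>
    rw [show (goodDFA B D).evalFrom 0 (x :: γ)
      = (goodDFA B D).evalFrom ((goodDFA B D).step 0 x) γ from rfl, goodLang_cons]
    by_cases hD : x ∈ D
    · rw [show (goodDFA B D).step 0 x = 1 by simp [goodDFA, hD]]
      simp only [goodDFA_eval1]
      tauto
    · by_cases hB : x ∈ B
      · rw [show (goodDFA B D).step 0 x = 0 by simp [goodDFA, hD, hB]]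
        rw [ih]
        tauto
      · rw [show (goodDFA B D).step 0 x = 2 by simp [goodDFA, hD, hB]]
        simp only [goodDFA_eval2]
        constructor
        · intro h; exact absurd h (by decide)
        · rintro (h | ⟨h, -⟩)
          · exact absurd h hD
          · exact absurd h hB

lemma goodDFA_accepts (B D : Set Γ) :
    (goodDFA B D).accepts = (goodLang B D : Language Γ) := by
  ext c
  rw [DFA.mem_accepts]
  show (goodDFA B D).evalFrom 0 c ∈ ({1} : Set (Fin 3)) ↔ _
  rw [Set.mem_singleton_iff]
  exact goodDFA_eval0 B D c

lemma goodLang_regular (B D : Set Γ) :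
    Language.IsRegular (goodLang B D : Language Γ) :=
  ⟨Fin 3, inferInstance, goodDFA B D, goodDFA_accepts B D⟩

end

/-- `W_Box(T,=1) = B* D Γ*` where `B = W_Box(T_ε,=1) ∩ Γ` and
`D = W_Box(T,=1) ∩ Γ`; consequently `W_Box(T,=1)` is a regular language. -/
theorem WBoxOne_eq_regular {Γ : Type*} [Fintype Γ] (Δ : BPA Γ) (ΓT : Set Γ)
    (hT : ∀ R ∈ ΓT, ∀ α, Δ.rule R α ↔ α = [R])
    (B D : Set Γ)
    (hB : B = {X | [X] ∈ Δ.WBoxOne (topLang ΓT ∪ {([] : List Γ)})})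
    (hD : D = {X | [X] ∈ Δ.WBoxOne (topLang ΓT)}) :
    (Δ.WBoxOne (topLang ΓT) : Language Γ)
        = KStar.kstar (symLang B) * symLang D * (⊤ : Language Γ) ∧
      Language.IsRegular (Δ.WBoxOne (topLang ΓT) : Language Γ) := by
  have hgood := WBoxOne_eq_goodLang Δ ΓT B D hB hD
  constructor
  · show (Δ.WBoxOne (topLang ΓT) : Language Γ) = _
    rw [show (Δ.WBoxOne (topLang ΓT) : Language Γ) = (goodLang B D : Language Γ) from
      congrArg _ hgood]
    exact goodLang_eq_lang B D
  · rw [show (Δ.WBoxOne (topLang ΓT) : Language Γ) = (goodLang B D : Language Γ) from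
      congrArg _ hgood]
    exact goodLang_regular B D
end
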